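/- arXiv:0812.4669 — 3 statements merged into one kernel-verified Lean document; each statement's English description precedes it below -/
import Mathlib

section
/- The number N(M,N) of collections {N_{jk}} of nonnegative integers (j ≥ 0, 1 ≤ k ≤ q_j with q_j = [j^{1/2}]) of ordered samples satisfying Σ_{j,k} N_{jk} = N and Σ_{j,k} j N_{jk} ≤ M satisfies N(M,N) ≤ N! exp{βM + μN + N} for any β > 0 and μ chosen so that Σ_{j≥0} q_j e^{-βj-μ} = N. -/
open Real

set_option maxHeartbeats 1000000 in
/-- The number of ordered placements of N distinguishable balls into compartments
(j,k), k < q_j = ⌊√j⌋, with total energy Σ j ≤ M, is at most N! exp(βM + μN + N),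
provided Σ_j q_j e^{-βj-μ} = N. -/
theorem ordered_sample_count_upper_bound (N M : ℕ) (β μ : ℝ) (hβ : 0 < β)
    (hnorm : ∑' j : ℕ, (⌊Real.sqrt j⌋₊ : ℝ) * Real.exp (-β * j - μ) = N) :
    ((Nat.card {g : Fin N → ℕ × ℕ //
        (∀ i, (g i).2 < ⌊Real.sqrt ((g i).1 : ℝ)⌋₊) ∧
        (∑ i, (g i).1) ≤ M}) : ℝ) ≤
      (Nat.factorial N : ℝ) * Real.exp (β * M + μ * N + N) := by
  classical
  simp_rw [Real.nat_floor_real_sqrt_eq_nat_sqrt] at hnorm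
  set F : Finset (ℕ × ℕ) :=
    (Finset.range (M+1) ×ˢ Finset.range (M+1)).filter
      (fun p => p.2 < Nat.sqrt p.1) with hF
  set T : Finset (Fin N → ℕ × ℕ) :=
    (Fintype.piFinset fun _ => F).filter
      (fun g => (∀ i, (g i).2 < ⌊Real.sqrt ((g i).1 : ℝ)⌋₊) ∧ (∑ i, (g i).1) ≤ M)
    with hT
  -- step 1: Nat.card of the subtype ≤ T.card
  have hmem : ∀ g : Fin N → ℕ × ℕ,
      ((∀ i, (g i).2 < ⌊Real.sqrt ((g i).1 : ℝ)⌋₊) ∧ (∑ i, (g i).1) ≤ M) → g ∈ T := by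
    intro g hg
    rw [hT, Finset.mem_filter]
    refine ⟨?_, hg⟩
    rw [Fintype.mem_piFinset]
    intro i
    have h1 : (g i).1 ≤ M :=
      le_trans (Finset.single_le_sum (f := fun i => (g i).1) (fun _ _ => Nat.zero_le _)
        (Finset.mem_univ i)) hg.2
    have h2 : (g i).2 < Nat.sqrt (g i).1 := by
      have := hg.1 i
      rwa [Real.nat_floor_real_sqrt_eq_nat_sqrt] at this
    have h3 : (g i).2 ≤ M := le_trans (le_of_lt (lt_of_lt_of_le h2 (Nat.sqrt_le_self _))) h1
    rw [hF, Finset.mem_filter, Finset.mem_product, Finset.mem_range, Finset.mem_range]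
    exact ⟨⟨Nat.lt_succ_of_le h1, Nat.lt_succ_of_le h3⟩, h2⟩
  have hcard : Nat.card {g : Fin N → ℕ × ℕ //
      (∀ i, (g i).2 < ⌊Real.sqrt ((g i).1 : ℝ)⌋₊) ∧ (∑ i, (g i).1) ≤ M} ≤ T.card := by
    have h0 : Nat.card {g : Fin N → ℕ × ℕ // g ∈ T} = T.card := by
      rw [Nat.card_eq_fintype_card, Fintype.card_coe]
    rw [← h0]
    apply Nat.card_le_card_of_injective (fun s => ⟨s.1, hmem s.1 s.2⟩)
    intro a b h
    have hv := congrArg Subtype.val h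
    exact Subtype.ext hv
  -- weights
  set w : ℕ × ℕ → ℝ := fun p => Real.exp (-β * p.1 - μ) with hw
  -- step 2: T.card ≤ exp(βM+μN) * (∑ p in F, w p)^N
  have hstep2 : (T.card : ℝ) ≤ Real.exp (β * M + μ * N) * (∑ p ∈ F, w p) ^ N := by
    have h1 : (T.card : ℝ) = ∑ g ∈ T, (1 : ℝ) := by simp
    rw [h1]
    have h2 : ∀ g ∈ T, (1 : ℝ) ≤ Real.exp (β * M + μ * N) * ∏ i, w (g i) := by
      intro g hg
      rw [hT, Finset.mem_filter] at hg
      have hprod : ∏ i, w (g i) = Real.exp (∑ i, (-β * ((g i).1 : ℝ) - μ)) := by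
        rw [Real.exp_sum]
      rw [hprod, ← Real.exp_add]
      rw [show (1:ℝ) = Real.exp 0 by simp]
      apply Real.exp_le_exp.mpr
      have hsum : ∑ i, (-β * ((g i).1:ℝ) - μ)
          = -β * ((∑ i, (g i).1 : ℕ) : ℝ) - μ * N := by
        rw [Finset.sum_sub_distrib, ← Finset.mul_sum, Nat.cast_sum]
        simp [Finset.sum_const, mul_comm]
      rw [hsum]
      have hM : (↑(∑ i, (g i).1) : ℝ) ≤ (M : ℝ) := Nat.cast_le.mpr hg.2.2
      nlinarith [hβ.le]
    calc ∑ g ∈ T, (1:ℝ) ≤ ∑ g ∈ T, Real.exp (β * M + μ * N) * ∏ i, w (g i) :=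
          Finset.sum_le_sum h2
      _ ≤ ∑ g ∈ Fintype.piFinset (fun _ : Fin N => F),
            Real.exp (β * M + μ * N) * ∏ i, w (g i) := by
          apply Finset.sum_le_sum_of_subset_of_nonneg
          · exact Finset.filter_subset _ _
          · intro g _ _
            exact mul_nonneg (Real.exp_nonneg _)
              (Finset.prod_nonneg fun i _ => Real.exp_nonneg _)
      _ = Real.exp (β * M + μ * N) *
            ∑ g ∈ Fintype.piFinset (fun _ : Fin N => F), ∏ i, w (g i) := by
          rw [← Finset.mul_sum]
      _ = Real.exp (β * M + μ * N) * (∑ p ∈ F, w p) ^ N := by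
          rw [← Finset.prod_univ_sum]
          simp [Finset.prod_const]
  -- step 3: ∑ p in F, w p ≤ N
  have hsummable : Summable (fun j : ℕ => (Nat.sqrt j : ℝ) * Real.exp (-β * j - μ)) := by
    refine Summable.of_nonneg_of_le (fun j => by positivity) (fun j => ?_)
      ((Real.summable_pow_mul_exp_neg_nat_mul 1 hβ).mul_right (Real.exp (-μ)))
    have hle : (Nat.sqrt j : ℝ) ≤ (j : ℝ) := by exact_mod_cast Nat.sqrt_le_self j
    calc (Nat.sqrt j : ℝ) * Real.exp (-β * j - μ)
          ≤ (j:ℝ) * Real.exp (-β * j - μ) :=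
            mul_le_mul_of_nonneg_right hle (Real.exp_nonneg _)
        _ = ((j:ℝ) ^ 1 * Real.exp (-β * j)) * Real.exp (-μ) := by
            rw [pow_one, Real.exp_sub, Real.exp_neg μ]
            ring
  have hFsum : ∑ p ∈ F, w p
      = ∑ j ∈ Finset.range (M+1), (Nat.sqrt j : ℝ) * Real.exp (-β * j - μ) := by
    rw [hF, Finset.sum_filter, Finset.sum_product]
    refine Finset.sum_congr rfl fun j hj => ?_
    have h1 : ∀ k ∈ Finset.range (M+1),
        (if (j, k).2 < Nat.sqrt (j, k).1 then w (j, k) else 0)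
        = if k ∈ Finset.range (Nat.sqrt j) then Real.exp (-β * j - μ) else 0 := by
      intro k _
      simp [hw, Finset.mem_range]
    rw [Finset.sum_congr rfl h1, Finset.sum_ite_mem]
    have hsle : Nat.sqrt j ≤ M + 1 :=
      le_trans (le_trans (Nat.sqrt_le_self j) (Nat.le_of_lt_succ (Finset.mem_range.mp hj)))
        (Nat.le_succ M)
    have h2 : Finset.range (M+1) ∩ Finset.range (Nat.sqrt j) = Finset.range (Nat.sqrt j) :=
      Finset.inter_eq_right.mpr (Finset.range_subset_range.mpr hsle)
    rw [h2, Finset.sum_const, Finset.card_range, nsmul_eq_mul]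
  have hstep3 : ∑ p ∈ F, w p ≤ (N : ℝ) := by
    rw [hFsum, ← hnorm]
    exact Summable.sum_le_tsum _ (fun j _ => by positivity) hsummable
  -- step 4: N^N ≤ N! * exp N
  have hfact : ((N:ℝ)) ^ N ≤ (Nat.factorial N : ℝ) * Real.exp N := by
    have h := Real.pow_div_factorial_le_exp (x := (N:ℝ)) (Nat.cast_nonneg N) N
    have hpos : (0:ℝ) < (Nat.factorial N : ℝ) := by exact_mod_cast Nat.factorial_pos N
    rw [div_le_iff₀ hpos] at h
    linarith [h]
  -- assemble
  have hFnonneg : 0 ≤ ∑ p ∈ F, w p := Finset.sum_nonneg fun p _ => Real.exp_nonneg _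
  calc ((Nat.card _ : ℕ) : ℝ) ≤ (T.card : ℝ) := Nat.cast_le.mpr hcard
    _ ≤ Real.exp (β * M + μ * N) * (∑ p ∈ F, w p) ^ N := hstep2
    _ ≤ Real.exp (β * M + μ * N) * (N:ℝ) ^ N := by
        apply mul_le_mul_of_nonneg_left _ (Real.exp_nonneg _)
        exact pow_le_pow_left₀ hFnonneg hstep3 N
    _ ≤ Real.exp (β * M + μ * N) * ((Nat.factorial N : ℝ) * Real.exp N) :=
        mul_le_mul_of_nonneg_left hfact (Real.exp_nonneg _)
    _ = (Nat.factorial N : ℝ) * Real.exp (β * M + μ * N + N) := by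
        rw [Real.exp_add, Real.exp_add, Real.exp_add]; ring
end

section
/- As β → 0⁺, Σ_{j=1}^∞ j [j^{1/2}] / (e^{βj} − 1) ∼ β^{-5/2} Γ(5/2) ζ(5/2), where the asymptotic constant equals ∫_0^∞ x^{3/2}/(e^x − 1) dx. -/
open Real Filter MeasureTheory Set

noncomputable def bosef (x : ℝ) : ℝ := x ^ ((3:ℝ)/2) / (Real.exp x - 1)

lemma exp_sub_one_ge {y : ℝ} (hy : 0 ≤ y) : y * Real.exp (y/2) ≤ Real.exp y - 1 := by
  have h1 : y / 2 ≤ Real.sinh (y/2) := Real.self_le_sinh_iff.mpr (by linarith)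
  have h2 : Real.sinh (y/2) = (Real.exp (y/2) - Real.exp (-(y/2))) / 2 := Real.sinh_eq _
  have h3 : Real.exp (y/2) * Real.exp (y/2) = Real.exp y := by
    rw [← Real.exp_add]; ring_nf
  have h4 : Real.exp (y/2) * Real.exp (-(y/2)) = 1 := by
    rw [← Real.exp_add]; simp
  nlinarith [Real.exp_pos (y/2)]

lemma bosef_nonneg {y : ℝ} (hy : 0 ≤ y) : 0 ≤ bosef y := by
  unfold bosef
  have : (1:ℝ) ≤ Real.exp y := by simpa using Real.exp_le_exp.mpr hy
  exact div_nonneg (Real.rpow_nonneg hy _) (by linarith)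

lemma bosef_le {y : ℝ} (hy : 0 ≤ y) : bosef y ≤ Real.sqrt y * Real.exp (-(y/2)) := by
  rcases eq_or_lt_of_le hy with rfl | hy
  · simp [bosef]
  · unfold bosef
    have hden : y * Real.exp (y/2) ≤ Real.exp y - 1 := exp_sub_one_ge hy.le
    have hdenpos : 0 < y * Real.exp (y/2) := mul_pos hy (Real.exp_pos _)
    calc y ^ ((3:ℝ)/2) / (Real.exp y - 1) ≤ y ^ ((3:ℝ)/2) / (y * Real.exp (y/2)) := by
          exact div_le_div_of_nonneg_left (Real.rpow_nonneg hy.le _) hdenpos hden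
      _ = Real.sqrt y * Real.exp (-(y/2)) := by
          rw [Real.sqrt_eq_rpow, Real.exp_neg]
          rw [show ((3:ℝ)/2) = 1 + 1/2 by norm_num, Real.rpow_add hy, Real.rpow_one]
          field_simp

lemma bound_integrable : IntegrableOn (fun x : ℝ => (x + 2) * Real.exp (-(x/2))) (Ioi 0) := by
  have h1 : IntegrableOn (fun x : ℝ => x * Real.exp (-(x/2))) (Ioi 0) := by
    have := integrableOn_rpow_mul_exp_neg_mul_rpow (s := 1) (p := 1) (b := 1/2)
      (by norm_num) one_pos (by norm_num)
    refine this.congr_fun (fun x hx => ?_) measurableSet_Ioi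
    simp only [Real.rpow_one]; ring_nf
  have h2' := (exp_neg_integrableOn_Ioi 0 (b := 1/2) (by norm_num : (0:ℝ) < 1/2))
  have h2 : IntegrableOn (fun x : ℝ => 2 * Real.exp (-(x/2))) (Ioi 0) := by
    refine IntegrableOn.congr_fun (h2'.const_mul 2) (fun x _ => ?_) measurableSet_Ioi
    ring_nf
  refine IntegrableOn.congr_fun (h1.add h2) (fun x _ => ?_) measurableSet_Ioi
  simp only [Pi.add_apply]; ring

lemma bosef_measurable : Measurable bosef :=
  ((Real.continuous_rpow_const (by norm_num)).measurable).div
    ((Real.measurable_exp).sub measurable_const)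

lemma step_measurable {β : ℝ} (hβ : 0 < β) :
    Measurable (fun x : ℝ => bosef (β * (⌈x / β⌉₊ : ℝ))) := by
  apply bosef_measurable.comp
  have : Monotone (fun x : ℝ => β * (⌈x / β⌉₊ : ℝ)) := by
    intro a b hab
    have h : ⌈a / β⌉₊ ≤ ⌈b / β⌉₊ := Nat.ceil_le_ceil ((div_le_div_iff_of_pos_right hβ).mpr hab)
    exact mul_le_mul_of_nonneg_left (by exact_mod_cast h) hβ.le
  exact this.measurable

lemma ceil_bounds {β x : ℝ} (hβ : 0 < β) (hx : 0 < x) :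
    x ≤ β * (⌈x / β⌉₊ : ℝ) ∧ β * (⌈x / β⌉₊ : ℝ) < x + β := by
  constructor
  · have h := Nat.le_ceil (x / β)
    have := mul_le_mul_of_nonneg_left h hβ.le
    calc x = β * (x / β) := by field_simp
      _ ≤ β * (⌈x / β⌉₊ : ℝ) := this
  · have h := Nat.ceil_lt_add_one (by positivity : (0:ℝ) ≤ x / β)
    have h2 := mul_lt_mul_of_pos_left h hβ
    have h3 : β * (x / β + 1) = x + β := by field_simp
    linarith

lemma bosef_continuousAt {x : ℝ} (hx : 0 < x) : ContinuousAt bosef x := by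
  apply ContinuousAt.div
  · exact (Real.continuous_rpow_const (by norm_num)).continuousAt
  · exact (Real.continuous_exp.sub continuous_const).continuousAt
  · have : (1:ℝ) < Real.exp x := by
      rw [show (1:ℝ) = Real.exp 0 by simp]; exact Real.exp_lt_exp.mpr hx
    linarith

lemma step_tendsto_pointwise {x : ℝ} (hx : 0 < x) :
    Tendsto (fun β : ℝ => bosef (β * (⌈x / β⌉₊ : ℝ))) (nhdsWithin 0 (Ioi 0)) (nhds (bosef x)) := by
  have hinner : Tendsto (fun β : ℝ => β * (⌈x / β⌉₊ : ℝ)) (nhdsWithin 0 (Ioi 0)) (nhds x) := by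
    refine tendsto_of_tendsto_of_tendsto_of_le_of_le' (g := fun _ : ℝ => x)
      (h := fun β : ℝ => x + β) tendsto_const_nhds ?_ ?_ ?_
    · have : Tendsto (fun β : ℝ => x + β) (nhdsWithin 0 (Ioi 0)) (nhds (x + 0)) :=
        (tendsto_const_nhds.add (tendsto_id.mono_left nhdsWithin_le_nhds))
      simpa using this
    · filter_upwards [self_mem_nhdsWithin] with β hβ
      exact (ceil_bounds hβ hx).1
    · filter_upwards [self_mem_nhdsWithin] with β hβ
      exact (ceil_bounds hβ hx).2.le
  exact (bosef_continuousAt hx).tendsto.comp hinner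

lemma step_bound {β x : ℝ} (hβ : 0 < β) (hβ1 : β ≤ 1) (hx : 0 < x) :
    ‖bosef (β * (⌈x / β⌉₊ : ℝ))‖ ≤ (x + 2) * Real.exp (-(x/2)) := by
  set y := β * (⌈x / β⌉₊ : ℝ) with hy
  obtain ⟨h1, h2⟩ := ceil_bounds hβ hx
  have hy0 : 0 ≤ y := le_trans hx.le h1
  have hyx1 : y ≤ x + 1 := by linarith
  rw [Real.norm_of_nonneg (bosef_nonneg hy0)]
  calc bosef y ≤ Real.sqrt y * Real.exp (-(y/2)) := bosef_le hy0
    _ ≤ (x + 2) * Real.exp (-(x/2)) := by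
        apply mul_le_mul
        · calc Real.sqrt y ≤ Real.sqrt ((x+2)^2) := Real.sqrt_le_sqrt (by nlinarith)
            _ = x + 2 := Real.sqrt_sq (by linarith)
        · exact Real.exp_le_exp.mpr (by linarith)
        · positivity
        · linarith

lemma core_limit :
    Tendsto (fun β : ℝ => ∫ x in Ioi (0:ℝ), bosef (β * (⌈x / β⌉₊ : ℝ)))
      (nhdsWithin 0 (Ioi 0)) (nhds (∫ x in Ioi (0:ℝ), bosef x)) := by
  apply MeasureTheory.tendsto_integral_filter_of_dominated_convergence
    (fun x => (x + 2) * Real.exp (-(x/2)))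
  · filter_upwards [self_mem_nhdsWithin] with β hβ
    exact ((step_measurable hβ).aestronglyMeasurable)
  · filter_upwards [Ioc_mem_nhdsGT_of_mem (by norm_num : (0:ℝ) ∈ Ico (0:ℝ) 1)] with β hβ
    filter_upwards [ae_restrict_mem measurableSet_Ioi] with x hx
    exact step_bound hβ.1 hβ.2 hx
  · exact bound_integrable
  · filter_upwards [ae_restrict_mem measurableSet_Ioi] with x hx
    exact step_tendsto_pointwise hx

lemma union_Ioc {β : ℝ} (hβ : 0 < β) :
    (⋃ j : ℕ, Ioc (β * j) (β * (j+1))) = Ioi (0:ℝ) := by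
  ext x
  simp only [mem_iUnion, mem_Ioc, mem_Ioi]
  constructor
  · rintro ⟨j, h1, _⟩
    have : (0:ℝ) ≤ β * j := by positivity
    linarith
  · intro hx
    have hn : 1 ≤ ⌈x / β⌉₊ := Nat.one_le_ceil_iff.mpr (by positivity)
    refine ⟨⌈x / β⌉₊ - 1, ?_, ?_⟩
    · have : ((⌈x / β⌉₊ - 1 : ℕ) : ℝ) < x / β :=
        Nat.lt_ceil.mp (Nat.sub_lt (by omega) one_pos)
      calc β * ((⌈x / β⌉₊ - 1 : ℕ) : ℝ) < β * (x / β) := mul_lt_mul_of_pos_left this hβ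
        _ = x := by field_simp
    · have h1 : x / β ≤ (⌈x / β⌉₊ : ℝ) := Nat.le_ceil _
      have h2 : ((⌈x / β⌉₊ - 1 : ℕ) : ℝ) + 1 = (⌈x / β⌉₊ : ℝ) := by
        rw [Nat.cast_sub hn]; push_cast; ring
      rw [h2]
      calc x = β * (x / β) := by field_simp
        _ ≤ β * (⌈x / β⌉₊ : ℝ) := mul_le_mul_of_nonneg_left h1 hβ.le

lemma ceil_on_piece {β x : ℝ} (hβ : 0 < β) {j : ℕ} (hx : x ∈ Ioc (β * j) (β * (j+1))) :
    ⌈x / β⌉₊ = j + 1 := by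
  obtain ⟨h1, h2⟩ := hx
  rw [Nat.ceil_eq_iff (by omega)]
  constructor
  · push_cast
    rw [lt_div_iff₀ hβ]
    linarith [mul_comm β (j:ℝ)]
  · push_cast
    rw [div_le_iff₀ hβ]
    linarith [mul_comm β ((j:ℝ)+1)]

lemma step_integral_eq {β : ℝ} (hβ : 0 < β) (hβ1 : β ≤ 1) :
    ∫ x in Ioi (0:ℝ), bosef (β * (⌈x / β⌉₊ : ℝ)) = ∑' j : ℕ, β * bosef (β * (j+1)) := by
  have hint : IntegrableOn (fun x : ℝ => bosef (β * (⌈x / β⌉₊ : ℝ))) (Ioi 0) := by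
    refine Integrable.mono' bound_integrable ((step_measurable hβ).aestronglyMeasurable) ?_
    filter_upwards [ae_restrict_mem measurableSet_Ioi] with x hx
    exact step_bound hβ hβ1 hx
  have hmeas : ∀ j : ℕ, MeasurableSet (Ioc (β * j) (β * (j+1))) := fun j => measurableSet_Ioc
  have hdisj : Pairwise (Function.onFun Disjoint fun j : ℕ => Ioc (β * j) (β * (j+1))) := by
    intro i j hij
    rcases lt_or_gt_of_ne hij with h | h
    · apply Set.Ioc_disjoint_Ioc.mpr
      have : β * (i+1) ≤ β * j := by
        apply mul_le_mul_of_nonneg_left _ hβ.le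
        exact_mod_cast Nat.succ_le_of_lt h
      exact min_le_of_left_le (le_max_of_le_right this)
    · apply Set.Ioc_disjoint_Ioc.mpr
      have : β * (j+1) ≤ β * i := by
        apply mul_le_mul_of_nonneg_left _ hβ.le
        exact_mod_cast Nat.succ_le_of_lt h
      exact min_le_of_right_le (le_max_of_le_left this)
  rw [← union_Ioc hβ] at hint ⊢
  rw [MeasureTheory.integral_iUnion hmeas hdisj hint]
  congr 1
  ext j
  have : ∀ x ∈ Ioc (β * j) (β * (j+1)),
      bosef (β * (⌈x / β⌉₊ : ℝ)) = bosef (β * (j+1)) := by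
    intro x hx
    rw [ceil_on_piece hβ hx]
    push_cast; ring_nf
  rw [setIntegral_congr_fun measurableSet_Ioc this, setIntegral_const, Real.volume_real_Ioc,
    max_eq_left (by nlinarith : (0:ℝ) ≤ β * (j+1) - β * j)]
  have : β * ((j:ℝ)+1) - β * j = β := by ring
  rw [this]
  simp

lemma zeta_re_eq : (riemannZeta (5/2)).re = ∑' n : ℕ, 1 / ((n:ℝ)+1) ^ ((5:ℝ)/2) := by
  have hs : 1 < ((5:ℂ)/2).re := by norm_num
  rw [zeta_eq_tsum_one_div_nat_add_one_cpow hs]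
  have hterm : ∀ n : ℕ, (1 / ((n:ℂ)+1) ^ ((5:ℂ)/2)) = ((1 / ((n:ℝ)+1) ^ ((5:ℝ)/2) : ℝ) : ℂ) := by
    intro n
    have h0 : (0:ℝ) ≤ (n:ℝ)+1 := by positivity
    rw [show ((n:ℂ)+1) = (((n:ℝ)+1 : ℝ) : ℂ) by push_cast; ring,
      show ((5:ℂ)/2) = (((5:ℝ)/2 : ℝ) : ℂ) by norm_num,
      ← Complex.ofReal_cpow h0]
    push_cast
    ring
  simp_rw [hterm]
  rw [← Complex.ofReal_tsum]
  simp

lemma summable_inv_rpow : Summable (fun n : ℕ => 1 / ((n:ℝ)+1) ^ ((5:ℝ)/2)) := by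
  have h : Summable (fun n : ℕ => 1 / ((n:ℝ)) ^ ((5:ℝ)/2)) :=
    Real.summable_one_div_nat_rpow.mpr (by norm_num)
  have := (summable_nat_add_iff 1).mpr h
  refine this.congr (fun n => ?_)
  push_cast
  ring_nf

lemma integrable_term (n : ℕ) :
    IntegrableOn (fun t : ℝ => t ^ ((3:ℝ)/2) * Real.exp (-(((n:ℝ)+1) * t))) (Ioi 0) := by
  have := integrableOn_rpow_mul_exp_neg_mul_rpow (s := 3/2) (p := 1) (b := (n:ℝ)+1)
    (by norm_num) one_pos (by positivity)
  refine this.congr_fun (fun x hx => ?_) measurableSet_Ioi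
  simp only [Real.rpow_one]; ring_nf

lemma term_integral (n : ℕ) :
    ∫ t in Ioi (0:ℝ), t ^ ((3:ℝ)/2) * Real.exp (-(((n:ℝ)+1) * t))
      = (1 / ((n:ℝ)+1)) ^ ((5:ℝ)/2) * Real.Gamma (5/2) := by
  have := Real.integral_rpow_mul_exp_neg_mul_Ioi (a := 5/2) (r := (n:ℝ)+1)
    (by norm_num) (by positivity)
  rw [show (5:ℝ)/2 - 1 = 3/2 by norm_num] at this
  exact this

lemma tsum_geom_pt {t : ℝ} (ht : 0 < t) :
    ∑' n : ℕ, t ^ ((3:ℝ)/2) * Real.exp (-(((n:ℝ)+1) * t))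
      = t ^ ((3:ℝ)/2) / (Real.exp t - 1) := by
  have hr1 : Real.exp (-t) < 1 := Real.exp_lt_one_iff.mpr (by linarith)
  have hr0 : 0 ≤ Real.exp (-t) := (Real.exp_pos _).le
  have hterm : ∀ n : ℕ, t ^ ((3:ℝ)/2) * Real.exp (-(((n:ℝ)+1) * t))
      = (t ^ ((3:ℝ)/2) * Real.exp (-t)) * Real.exp (-t) ^ n := by
    intro n
    rw [show -(((n:ℝ)+1) * t) = ((n:ℕ):ℝ) * (-t) + (-t) by push_cast; ring, Real.exp_add,
      Real.exp_nat_mul]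
    ring
  simp_rw [hterm]
  rw [tsum_mul_left, tsum_geometric_of_lt_one hr0 hr1]
  have hE : Real.exp t ≠ 0 := (Real.exp_pos _).ne'
  have hE1 : Real.exp t - 1 ≠ 0 := by
    have : (1:ℝ) < Real.exp t := by
      rw [show (1:ℝ) = Real.exp 0 by simp]; exact Real.exp_lt_exp.mpr ht
    linarith
  rw [Real.exp_neg]
  have h1r : 1 - (Real.exp t)⁻¹ ≠ 0 := by
    rw [Real.exp_neg] at hr1
    intro h
    have : (Real.exp t)⁻¹ = 1 := by linarith
    rw [this] at hr1; norm_num at hr1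
  field_simp

lemma bose_integral_eq :
    Real.Gamma (5/2) * (riemannZeta (5/2)).re =
      ∫ x in Ioi (0:ℝ), x ^ ((3:ℝ)/2) / (Real.exp x - 1) := by
  rw [zeta_re_eq, ← tsum_mul_left]
  have hval : ∀ n : ℕ, Real.Gamma (5/2) * (1 / ((n:ℝ)+1) ^ ((5:ℝ)/2))
      = ∫ t in Ioi (0:ℝ), t ^ ((3:ℝ)/2) * Real.exp (-(((n:ℝ)+1) * t)) := by
    intro n
    rw [term_integral n, Real.div_rpow (by norm_num) (by positivity), Real.one_rpow]
    ring
  simp_rw [hval]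
  have hnorm : ∀ n : ℕ, (∫ t in Ioi (0:ℝ), ‖t ^ ((3:ℝ)/2) * Real.exp (-(((n:ℝ)+1) * t))‖)
      = ∫ t in Ioi (0:ℝ), t ^ ((3:ℝ)/2) * Real.exp (-(((n:ℝ)+1) * t)) := by
    intro n
    refine setIntegral_congr_fun measurableSet_Ioi (fun t ht => ?_)
    have ht' : (0:ℝ) < t := ht
    rw [Real.norm_of_nonneg (by positivity)]
  have hsum : Summable fun n : ℕ =>
      ∫ t in Ioi (0:ℝ), ‖t ^ ((3:ℝ)/2) * Real.exp (-(((n:ℝ)+1) * t))‖ := by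
    refine (summable_inv_rpow.mul_right (Real.Gamma (5/2))).congr (fun n => ?_)
    rw [hnorm n, ← hval n]
    ring
  rw [MeasureTheory.integral_tsum_of_summable_integral_norm (fun n => integrable_term n) hsum]
  refine setIntegral_congr_fun measurableSet_Ioi (fun t ht => ?_)
  exact tsum_geom_pt ht

section
variable {β : ℝ} (hβ : 0 < β)

lemma denom_pos (hβ : 0 < β) (j : ℕ) : 0 < Real.exp (β*((j:ℝ)+1)) - 1 := by
  have h : (0:ℝ) < β*((j:ℝ)+1) := by positivity
  have := Real.exp_lt_exp.mpr h
  simp only [Real.exp_zero] at this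
  linarith

lemma sum_rewrite (hβ : 0 < β) :
    ∑' j : ℕ, β * bosef (β*((j:ℝ)+1)) =
      β ^ ((5:ℝ)/2) * ∑' j : ℕ, ((j:ℝ)+1) ^ ((3:ℝ)/2) / (Real.exp (β*((j:ℝ)+1)) - 1) := by
  rw [← tsum_mul_left]
  congr 1; ext j
  unfold bosef
  rw [Real.mul_rpow hβ.le (by positivity)]
  have h52 : β * β ^ ((3:ℝ)/2) = β ^ ((5:ℝ)/2) := by
    rw [show (5:ℝ)/2 = 1 + 3/2 by norm_num, Real.rpow_add hβ, Real.rpow_one]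
  field_simp
  rw [← h52]

lemma rpow32_eq (j : ℕ) : ((j:ℝ)+1) ^ ((3:ℝ)/2) = ((j:ℝ)+1) * Real.sqrt ((j:ℝ)+1) := by
  rw [show (3:ℝ)/2 = 1 + 1/2 by norm_num, Real.rpow_add (by positivity), Real.rpow_one,
    Real.sqrt_eq_rpow]

-- termwise bounds
lemma A_le_B (hβ : 0 < β) (j : ℕ) :
    ((j:ℝ)+1) * (⌊Real.sqrt ((j:ℝ)+1)⌋₊ : ℝ) / (Real.exp (β*((j:ℝ)+1)) - 1)
      ≤ ((j:ℝ)+1) ^ ((3:ℝ)/2) / (Real.exp (β*((j:ℝ)+1)) - 1) := by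
  have h := denom_pos hβ j
  rw [rpow32_eq]
  gcongr
  exact Nat.floor_le (Real.sqrt_nonneg _)

end

section
variable {β : ℝ}

-- key denominator bound:  c/(e^{βm}-1) ≤ c/(βm) e^{-βm/2}
lemma div_denom_le (hβ : 0 < β) (j : ℕ) {c : ℝ} (hc : 0 ≤ c) :
    c / (Real.exp (β*((j:ℝ)+1)) - 1) ≤ c / (β*((j:ℝ)+1)) * Real.exp (-(β*((j:ℝ)+1)/2)) := by
  set y := β*((j:ℝ)+1) with hy
  have hy0 : 0 < y := by positivity
  have h1 : y * Real.exp (y/2) ≤ Real.exp y - 1 := exp_sub_one_ge hy0.le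
  have h2 : 0 < y * Real.exp (y/2) := by positivity
  calc c / (Real.exp y - 1) ≤ c / (y * Real.exp (y/2)) :=
        div_le_div_of_nonneg_left hc h2 h1
    _ = c / y * Real.exp (-(y/2)) := by
        rw [Real.exp_neg]; field_simp

lemma B_le_A_add (hβ : 0 < β) (j : ℕ) :
    ((j:ℝ)+1) ^ ((3:ℝ)/2) / (Real.exp (β*((j:ℝ)+1)) - 1)
      ≤ ((j:ℝ)+1) * (⌊Real.sqrt ((j:ℝ)+1)⌋₊ : ℝ) / (Real.exp (β*((j:ℝ)+1)) - 1)
        + β⁻¹ * Real.exp (-(β*((j:ℝ)+1)/2)) := by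
  have hD := denom_pos hβ j
  have hfloor : Real.sqrt ((j:ℝ)+1) ≤ (⌊Real.sqrt ((j:ℝ)+1)⌋₊ : ℝ) + 1 :=
    (Nat.lt_floor_add_one _).le
  have h1 : ((j:ℝ)+1) ^ ((3:ℝ)/2) ≤ ((j:ℝ)+1) * (⌊Real.sqrt ((j:ℝ)+1)⌋₊ : ℝ) + ((j:ℝ)+1) := by
    rw [rpow32_eq]
    nlinarith [(by positivity : (0:ℝ) ≤ (j:ℝ)+1)]
  have h2 : (((j:ℝ)+1) * (⌊Real.sqrt ((j:ℝ)+1)⌋₊ : ℝ) + ((j:ℝ)+1)) / (Real.exp (β*((j:ℝ)+1)) - 1)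
      = ((j:ℝ)+1) * (⌊Real.sqrt ((j:ℝ)+1)⌋₊ : ℝ) / (Real.exp (β*((j:ℝ)+1)) - 1)
        + ((j:ℝ)+1) / (Real.exp (β*((j:ℝ)+1)) - 1) := by
    field_simp
  have h3 : ((j:ℝ)+1) / (Real.exp (β*((j:ℝ)+1)) - 1) ≤ β⁻¹ * Real.exp (-(β*((j:ℝ)+1)/2)) := by
    have := div_denom_le hβ j (by positivity : (0:ℝ) ≤ (j:ℝ)+1)
    have heq : ((j:ℝ)+1) / (β*((j:ℝ)+1)) = β⁻¹ := by
      field_simp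
    rw [heq] at this
    exact this
  calc ((j:ℝ)+1) ^ ((3:ℝ)/2) / (Real.exp (β*((j:ℝ)+1)) - 1)
      ≤ (((j:ℝ)+1) * (⌊Real.sqrt ((j:ℝ)+1)⌋₊ : ℝ) + ((j:ℝ)+1)) / (Real.exp (β*((j:ℝ)+1)) - 1) := by
        gcongr
    _ = _ + ((j:ℝ)+1) / (Real.exp (β*((j:ℝ)+1)) - 1) := h2
    _ ≤ _ := by linarith

end

section
variable {β : ℝ}

lemma exp_geom_eq (hβ : 0 < β) (j : ℕ) :
    Real.exp (-(β*((j:ℝ)+1)/2)) = Real.exp (-(β/2)) ^ (j+1) := by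
  rw [← Real.exp_nat_mul]
  congr 1
  push_cast
  ring

lemma summable_geom (hβ : 0 < β) : Summable (fun j : ℕ => Real.exp (-(β*((j:ℝ)+1)/2))) := by
  have hr : Real.exp (-(β/2)) < 1 := Real.exp_lt_one_iff.mpr (by linarith)
  have hr0 : 0 ≤ Real.exp (-(β/2)) := (Real.exp_pos _).le
  have h : Summable (fun j : ℕ => Real.exp (-(β/2)) ^ (j+1)) :=
    ((summable_geometric_of_lt_one hr0 hr).comp_injective (add_left_injective 1))
  exact h.congr (fun j => (exp_geom_eq hβ j).symm)

lemma summable_jgeom (hβ : 0 < β) :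
    Summable (fun j : ℕ => ((j:ℝ)+1) * Real.exp (-(β*((j:ℝ)+1)/2))) := by
  have hr : ‖Real.exp (-(β/2))‖ < 1 := by
    rw [Real.norm_eq_abs, abs_of_pos (Real.exp_pos _)]
    exact Real.exp_lt_one_iff.mpr (by linarith)
  have h := summable_pow_mul_geometric_of_norm_lt_one 1 hr (R := ℝ)
  have h2 := (summable_nat_add_iff 1).mpr h
  refine h2.congr (fun j => ?_)
  rw [exp_geom_eq hβ j]
  push_cast
  ring

lemma summable_B (hβ : 0 < β) :
    Summable (fun j : ℕ => ((j:ℝ)+1) ^ ((3:ℝ)/2) / (Real.exp (β*((j:ℝ)+1)) - 1)) := by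
  refine Summable.of_nonneg_of_le (fun j => ?_) (fun j => ?_)
    ((summable_jgeom hβ).mul_left β⁻¹)
  · exact div_nonneg (by positivity) (denom_pos hβ j).le
  · calc ((j:ℝ)+1) ^ ((3:ℝ)/2) / (Real.exp (β*((j:ℝ)+1)) - 1)
        ≤ ((j:ℝ)+1) ^ ((3:ℝ)/2) / (β*((j:ℝ)+1)) * Real.exp (-(β*((j:ℝ)+1)/2)) :=
          div_denom_le hβ j (by positivity)
      _ ≤ β⁻¹ * (((j:ℝ)+1) * Real.exp (-(β*((j:ℝ)+1)/2))) := by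
          have hsqrt : Real.sqrt ((j:ℝ)+1) ≤ (j:ℝ)+1 := by
            calc Real.sqrt ((j:ℝ)+1) ≤ Real.sqrt (((j:ℝ)+1)^2) :=
                  Real.sqrt_le_sqrt (by nlinarith [(by positivity : (0:ℝ) ≤ (j:ℝ))])
              _ = (j:ℝ)+1 := Real.sqrt_sq (by positivity)
          have hq : ((j:ℝ)+1) ^ ((3:ℝ)/2) / (β*((j:ℝ)+1)) ≤ β⁻¹ * ((j:ℝ)+1) := by
            rw [rpow32_eq]
            rw [div_le_iff₀ (by positivity)]
            have : ((j:ℝ)+1) * Real.sqrt ((j:ℝ)+1) ≤ ((j:ℝ)+1) * ((j:ℝ)+1) := by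
              gcongr
            calc ((j:ℝ)+1) * Real.sqrt ((j:ℝ)+1) ≤ ((j:ℝ)+1) * ((j:ℝ)+1) := this
              _ = β⁻¹ * ((j:ℝ)+1) * (β*((j:ℝ)+1)) := by field_simp
          calc ((j:ℝ)+1) ^ ((3:ℝ)/2) / (β*((j:ℝ)+1)) * Real.exp (-(β*((j:ℝ)+1)/2))
              ≤ β⁻¹ * ((j:ℝ)+1) * Real.exp (-(β*((j:ℝ)+1)/2)) := by
                exact mul_le_mul_of_nonneg_right hq (Real.exp_pos _).le
            _ = β⁻¹ * (((j:ℝ)+1) * Real.exp (-(β*((j:ℝ)+1)/2))) := by ring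

lemma tsum_geom_le (hβ : 0 < β) :
    ∑' j : ℕ, Real.exp (-(β*((j:ℝ)+1)/2)) ≤ 2/β := by
  have hr : Real.exp (-(β/2)) < 1 := Real.exp_lt_one_iff.mpr (by linarith)
  have hr0 : 0 ≤ Real.exp (-(β/2)) := (Real.exp_pos _).le
  have heq : ∑' j : ℕ, Real.exp (-(β*((j:ℝ)+1)/2))
      = Real.exp (-(β/2)) * (1 - Real.exp (-(β/2)))⁻¹ := by
    calc ∑' j : ℕ, Real.exp (-(β*((j:ℝ)+1)/2)) = ∑' j : ℕ, Real.exp (-(β/2)) * Real.exp (-(β/2)) ^ j := by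
          congr 1; ext j; rw [exp_geom_eq hβ j, pow_succ]; ring
      _ = Real.exp (-(β/2)) * (1 - Real.exp (-(β/2)))⁻¹ := by
          rw [tsum_mul_left, tsum_geometric_of_lt_one hr0 hr]
  rw [heq]
  have hE : (1:ℝ) < Real.exp (β/2) := by
    rw [show (1:ℝ) = Real.exp 0 by simp]; exact Real.exp_lt_exp.mpr (by linarith)
  have heq2 : Real.exp (-(β/2)) * (1 - Real.exp (-(β/2)))⁻¹ = (Real.exp (β/2) - 1)⁻¹ := by
    have h1 : Real.exp (β/2) ≠ 0 := (Real.exp_pos _).ne'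
    have h2 : Real.exp (β/2) - 1 ≠ 0 := by linarith
    have h3 : (1:ℝ) - (Real.exp (β/2))⁻¹ ≠ 0 := by
      have hlt : (Real.exp (β/2))⁻¹ < 1 := by rw [← Real.exp_neg]; exact hr
      linarith
    rw [Real.exp_neg]
    field_simp
  rw [heq2]
  have hhalf : β/2 ≤ Real.exp (β/2) - 1 := by
    have := Real.add_one_le_exp (β/2); linarith
  calc (Real.exp (β/2) - 1)⁻¹ ≤ (β/2)⁻¹ :=
        inv_anti₀ (by linarith) hhalf
    _ = 2/β := by field_simp
end

/-- As β → 0⁺, Σ_{j≥1} j⌊√j⌋/(e^{βj}−1) ∼ β^{-5/2} Γ(5/2) ζ(5/2), the constant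
being the Bose integral ∫_0^∞ x^{3/2}/(e^x−1) dx. -/
theorem bose_energy_sum_asymptotic :
    Filter.Tendsto
      (fun β : ℝ =>
        (∑' j : ℕ, ((j + 1 : ℕ) : ℝ) * (⌊Real.sqrt ((j + 1 : ℕ) : ℝ)⌋₊ : ℝ) /
            (Real.exp (β * ((j + 1 : ℕ) : ℝ)) - 1)) /
          (β ^ (-(5:ℝ)/2) * Real.Gamma (5/2) * (riemannZeta (5/2)).re))
      (nhdsWithin 0 (Set.Ioi 0)) (nhds 1) ∧
    Real.Gamma (5/2) * (riemannZeta (5/2)).re =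
      ∫ x in Set.Ioi (0:ℝ), x ^ ((3:ℝ)/2) / (Real.exp x - 1) := by
  have hζpos : 0 < (riemannZeta (5/2)).re := by
    rw [zeta_re_eq]
    refine Summable.tsum_pos summable_inv_rpow (fun n => by positivity) 0 (by norm_num)
  have hC : 0 < Real.Gamma (5/2) * (riemannZeta (5/2)).re :=
    mul_pos (Real.Gamma_pos_of_pos (by norm_num)) hζpos
  set C := Real.Gamma (5/2) * (riemannZeta (5/2)).re with hCdef
  have hCint : C = ∫ x in Ioi (0:ℝ), bosef x := bose_integral_eq
  refine ⟨?_, bose_integral_eq⟩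
  -- notation
  set N : ℝ → ℝ := fun β => ∑' j : ℕ, ((j:ℝ)+1) * (⌊Real.sqrt ((j:ℝ)+1)⌋₊ : ℝ) /
      (Real.exp (β * ((j:ℝ)+1)) - 1) with hNdef
  set T : ℝ → ℝ := fun β => ∑' j : ℕ, ((j:ℝ)+1) ^ ((3:ℝ)/2) / (Real.exp (β*((j:ℝ)+1)) - 1)
    with hTdef
  have hsummA : ∀ {β : ℝ}, 0 < β → Summable (fun j : ℕ =>
      ((j:ℝ)+1) * (⌊Real.sqrt ((j:ℝ)+1)⌋₊ : ℝ) / (Real.exp (β * ((j:ℝ)+1)) - 1)) := by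
    intro β hβ
    refine Summable.of_nonneg_of_le (fun j => ?_) (A_le_B hβ) (summable_B hβ)
    exact div_nonneg (by positivity) (denom_pos hβ j).le
  -- limit of β^{5/2} * T β
  have hT : Tendsto (fun β : ℝ => β ^ ((5:ℝ)/2) * T β) (nhdsWithin 0 (Ioi 0)) (nhds C) := by
    rw [hCint]
    refine core_limit.congr' ?_
    filter_upwards [Ioc_mem_nhdsGT_of_mem (by norm_num : (0:ℝ) ∈ Ico (0:ℝ) 1)] with β hβ
    rw [step_integral_eq hβ.1 hβ.2, sum_rewrite hβ.1]
  -- squeeze for N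
  have hNlim : Tendsto (fun β : ℝ => β ^ ((5:ℝ)/2) * N β) (nhdsWithin 0 (Ioi 0)) (nhds C) := by
    have hhalf : Tendsto (fun β : ℝ => β ^ ((5:ℝ)/2) * T β - 2 * β ^ ((1:ℝ)/2))
        (nhdsWithin 0 (Ioi 0)) (nhds C) := by
      have h0 : Tendsto (fun β : ℝ => β ^ ((1:ℝ)/2)) (nhdsWithin 0 (Ioi 0)) (nhds 0) := by
        have := ((Real.continuous_rpow_const (by norm_num : (0:ℝ) ≤ 1/2)).tendsto 0).mono_left
          (nhdsWithin_le_nhds (s := Ioi (0:ℝ)))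
        simpa [Real.zero_rpow (by norm_num : ((1:ℝ)/2) ≠ 0)] using this
      have := hT.sub ((h0.const_mul 2))
      simpa using this
    refine tendsto_of_tendsto_of_tendsto_of_le_of_le' hhalf hT ?_ ?_
    · filter_upwards [self_mem_nhdsWithin] with β hβ
      have hβ : (0:ℝ) < β := hβ
      have hSA := hsummA hβ
      have hSB := summable_B hβ
      have hSG := (summable_geom hβ).mul_left β⁻¹
      have h1 : T β ≤ N β + β⁻¹ * (2/β) := by
        calc T β ≤ ∑' j : ℕ, (((j:ℝ)+1) * (⌊Real.sqrt ((j:ℝ)+1)⌋₊ : ℝ) /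
              (Real.exp (β*((j:ℝ)+1)) - 1) + β⁻¹ * Real.exp (-(β*((j:ℝ)+1)/2))) :=
              hSB.tsum_le_tsum (B_le_A_add hβ) (hSA.add hSG)
          _ = N β + β⁻¹ * ∑' j : ℕ, Real.exp (-(β*((j:ℝ)+1)/2)) := by
              rw [hSA.tsum_add hSG, tsum_mul_left]
          _ ≤ N β + β⁻¹ * (2/β) := by
              have := tsum_geom_le hβ
              have hβinv : (0:ℝ) ≤ β⁻¹ := by positivity
              nlinarith
      have hpow : β ^ ((5:ℝ)/2) * (β⁻¹ * (2/β)) = 2 * β ^ ((1:ℝ)/2) := by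
        have h5 : β ^ ((5:ℝ)/2) = β ^ ((1:ℝ)/2) * β * β := by
          rw [show (5:ℝ)/2 = 1/2 + 1 + 1 by norm_num, Real.rpow_add hβ, Real.rpow_add hβ,
            Real.rpow_one]
        rw [h5]
        field_simp
      have h2 : β ^ ((5:ℝ)/2) * T β ≤ β ^ ((5:ℝ)/2) * N β + 2 * β ^ ((1:ℝ)/2) := by
        calc β ^ ((5:ℝ)/2) * T β ≤ β ^ ((5:ℝ)/2) * (N β + β⁻¹ * (2/β)) := by
              exact mul_le_mul_of_nonneg_left h1 (by positivity)
          _ = β ^ ((5:ℝ)/2) * N β + 2 * β ^ ((1:ℝ)/2) := by rw [mul_add, hpow]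
      linarith
    · filter_upwards [self_mem_nhdsWithin] with β hβ
      have hβ : (0:ℝ) < β := hβ
      exact mul_le_mul_of_nonneg_left
        ((hsummA hβ).tsum_le_tsum (A_le_B hβ) (summable_B hβ)) (by positivity)
  -- final ratio
  have hfinal : Tendsto (fun β : ℝ => (β ^ ((5:ℝ)/2) * N β) / C) (nhdsWithin 0 (Ioi 0))
      (nhds 1) := by
    have := hNlim.div_const C
    rwa [div_self hC.ne'] at this
  refine hfinal.congr' ?_
  filter_upwards [self_mem_nhdsWithin] with β hβ
  have hβ : (0:ℝ) < β := hβ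
  have hpow : β ^ (-(5:ℝ)/2) = (β ^ ((5:ℝ)/2))⁻¹ := by
    rw [show -(5:ℝ)/2 = -((5:ℝ)/2) by norm_num, Real.rpow_neg hβ.le]
  have hcast : (∑' j : ℕ, ((j + 1 : ℕ) : ℝ) * (⌊Real.sqrt ((j + 1 : ℕ) : ℝ)⌋₊ : ℝ) /
      (Real.exp (β * ((j + 1 : ℕ) : ℝ)) - 1)) = N β := by
    simp only [hNdef, Nat.cast_add, Nat.cast_one]
  rw [hpow, hcast]
  have hne : β ^ ((5:ℝ)/2) ≠ 0 := by positivity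
  rw [show (β ^ ((5:ℝ)/2))⁻¹ * Real.Gamma (5/2) * (riemannZeta (5/2)).re
      = (β ^ ((5:ℝ)/2))⁻¹ * C by rw [hCdef]; ring]
  field_simp
end

section
/- If the multiplicities q_j are all multiplied by a constant K ≥ 1, the critical number scales as Ñ_cr ∼ K^{2/5} N_cr as M → ∞. -/
open Real Filter

open MeasureTheory Set Topology

set_option maxHeartbeats 1000000

namespace NcrAux

/-- q n = ⌊√n⌋ as a real number -/
noncomputable def q (n : ℕ) : ℝ := (⌊Real.sqrt (n : ℝ)⌋₊ : ℝ)

lemma q_nonneg (n : ℕ) : 0 ≤ q n := Nat.cast_nonneg _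

lemma q_le_sqrt (n : ℕ) : q n ≤ Real.sqrt n :=
  Nat.floor_le (Real.sqrt_nonneg _)

lemma sqrt_lt_q_add_one (n : ℕ) : Real.sqrt n < q n + 1 :=
  Nat.lt_floor_add_one _

/-- Key inequality: e^x - 1 ≥ x e^{x/2} for x ≥ 0. -/
lemma exp_lower {x : ℝ} (hx : 0 ≤ x) : x * Real.exp (x / 2) ≤ Real.exp x - 1 := by
  have h : x / 2 ≤ Real.sinh (x / 2) := Real.self_le_sinh_iff.2 (by linarith)
  have hsinh : Real.sinh (x / 2) = (Real.exp (x / 2) - Real.exp (-(x / 2))) / 2 :=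
    Real.sinh_eq _
  have hexp : Real.exp (x / 2) * Real.exp (x / 2) = Real.exp x := by
    rw [← Real.exp_add]; ring_nf
  have hexp2 : Real.exp (x / 2) * Real.exp (-(x / 2)) = 1 := by
    rw [← Real.exp_add]; ring_nf; exact Real.exp_zero
  nlinarith [Real.exp_pos (x / 2)]

/-- 1/(e^x − 1) ≤ e^{−x/2}/x for x > 0. -/
lemma inv_exp_sub_one_le {x : ℝ} (hx : 0 < x) :
    (Real.exp x - 1)⁻¹ ≤ Real.exp (-(x / 2)) / x := by
  have h1 : 0 < x * Real.exp (x / 2) := by positivity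
  have h2 := exp_lower hx.le
  have h3 : 0 < Real.exp x - 1 := by
    have := Real.add_one_le_exp x; nlinarith
  rw [Real.exp_neg]
  have := one_div_le_one_div_of_le h1 h2
  calc (Real.exp x - 1)⁻¹ ≤ (x * Real.exp (x / 2))⁻¹ := by
        exact inv_anti₀ h1 h2
    _ = (Real.exp (x / 2))⁻¹ / x := by
        rw [mul_inv]; ring

lemma exp_sub_one_pos {x : ℝ} (hx : 0 < x) : 0 < Real.exp x - 1 := by
  have := Real.add_one_le_exp x
  have h := Real.exp_pos x
  nlinarith

/-- the general term of our sums -/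
noncomputable def term (p b : ℝ) (j : ℕ) : ℝ :=
  ((j + 1 : ℕ) : ℝ) ^ p * q (j + 1) / (Real.exp (b * ((j + 1 : ℕ) : ℝ)) - 1)

lemma term_nonneg (p b : ℝ) (hb : 0 < b) (j : ℕ) : 0 ≤ term p b j := by
  unfold term
  have hd : 0 < Real.exp (b * ((j + 1 : ℕ) : ℝ)) - 1 := by
    apply exp_sub_one_pos; positivity
  have : (0:ℝ) ≤ ((j + 1 : ℕ) : ℝ) ^ p := by positivity
  exact div_nonneg (mul_nonneg this (q_nonneg _)) hd.le

lemma term_le (p b : ℝ) (hp1 : p ≤ 1) (hb : 0 < b) (j : ℕ) :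
    term p b j ≤ b⁻¹ * (((j+1 : ℕ):ℝ) ^ (2:ℕ) * Real.exp (-(b/2)) ^ (j+1)) := by
  set n : ℕ := j + 1 with hn
  have hn1 : (1:ℝ) ≤ (n:ℝ) := by exact_mod_cast Nat.one_le_iff_ne_zero.2 (by omega)
  have hnpos : (0:ℝ) < (n:ℝ) := by linarith
  have hx : 0 < b * (n:ℝ) := by positivity
  have hnum : ((n:ℕ):ℝ) ^ p * q n ≤ (n:ℝ) ^ (2:ℕ) := by
    have h1 : ((n:ℕ):ℝ) ^ p ≤ (n:ℝ) ^ (1:ℝ) :=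
      Real.rpow_le_rpow_of_exponent_le hn1 hp1
    have h2 : q n ≤ (n:ℝ) := by
      calc q n ≤ Real.sqrt n := q_le_sqrt n
        _ ≤ Real.sqrt ((n:ℝ)^2) := by
            apply Real.sqrt_le_sqrt; nlinarith
        _ = (n:ℝ) := by rw [Real.sqrt_sq hnpos.le]
    calc ((n:ℕ):ℝ) ^ p * q n ≤ (n:ℝ) ^ (1:ℝ) * (n:ℝ) := by
          apply mul_le_mul h1 h2 (q_nonneg n) (by positivity)
      _ = (n:ℝ) ^ (2:ℕ) := by rw [Real.rpow_one]; ring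
  have hden : (Real.exp (b * (n:ℝ)) - 1)⁻¹ ≤ Real.exp (-(b * (n:ℝ) / 2)) / (b * (n:ℝ)) :=
    inv_exp_sub_one_le hx
  have hexp : Real.exp (-(b * (n:ℝ) / 2)) = Real.exp (-(b/2)) ^ (n:ℕ) := by
    rw [← Real.exp_nat_mul]; congr 1; ring
  have hd : 0 < Real.exp (b * (n:ℝ)) - 1 := exp_sub_one_pos hx
  calc term p b j = ((n:ℕ):ℝ) ^ p * q n * (Real.exp (b * (n:ℝ)) - 1)⁻¹ := by
        unfold term; rw [div_eq_mul_inv]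
    _ ≤ (n:ℝ) ^ (2:ℕ) * (Real.exp (-(b * (n:ℝ) / 2)) / (b * (n:ℝ))) := by
        apply mul_le_mul hnum hden (by positivity) (by positivity)
    _ ≤ (n:ℝ) ^ (2:ℕ) * (Real.exp (-(b/2)) ^ (n:ℕ) / b) := by
        apply mul_le_mul_of_nonneg_left _ (by positivity)
        rw [hexp]
        apply div_le_div_of_nonneg_left (by positivity) hb
        nlinarith
    _ = b⁻¹ * ((n:ℝ) ^ (2:ℕ) * Real.exp (-(b/2)) ^ (n:ℕ)) := by ring

lemma summable_term (p b : ℝ) (hp1 : p ≤ 1) (hb : 0 < b) :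
    Summable (term p b) := by
  have hr : ‖Real.exp (-(b/2))‖ < 1 := by
    rw [Real.norm_eq_abs, abs_of_pos (Real.exp_pos _)]
    rw [Real.exp_lt_one_iff]; linarith
  have h0 : Summable (fun n : ℕ => (n:ℝ) ^ (2:ℕ) * Real.exp (-(b/2)) ^ n) :=
    summable_pow_mul_geometric_of_norm_lt_one 2 hr
  have h1 : Summable (fun j : ℕ => b⁻¹ * (((j+1:ℕ):ℝ) ^ (2:ℕ) * Real.exp (-(b/2)) ^ (j+1))) := by
    apply Summable.mul_left
    have h2 := (summable_nat_add_iff (f := fun n : ℕ => (n:ℝ)^(2:ℕ) * Real.exp (-(b/2)) ^ n) 1).2 h0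
    simpa using h2
  exact h1.of_nonneg_of_le (term_nonneg p b hb) (term_le p b hp1 hb)

/-- The scaled sums -/
noncomputable def S (p b : ℝ) : ℝ := ∑' j : ℕ, term p b j

lemma S_pos (p b : ℝ) (hp1 : p ≤ 1) (hb : 0 < b) : 0 < S p b := by
  apply Summable.tsum_pos (summable_term p b hp1 hb) (term_nonneg p b hb) 0
  have h0 : term p b 0 = 1 / (Real.exp b - 1) := by
    unfold term q
    norm_num [Real.one_rpow, Real.sqrt_one]
  rw [h0]
  exact div_pos one_pos (exp_sub_one_pos hb)

lemma S_anti (p : ℝ) (hp1 : p ≤ 1) {a b : ℝ} (ha : 0 < a) (hab : a ≤ b) :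
    S p b ≤ S p a := by
  have hb : 0 < b := lt_of_lt_of_le ha hab
  apply Summable.tsum_le_tsum _ (summable_term p b hp1 hb) (summable_term p a hp1 ha)
  intro j
  unfold term
  have hnpos : (0:ℝ) < ((j+1:ℕ):ℝ) := by positivity
  have hda : 0 < Real.exp (a * ((j+1:ℕ):ℝ)) - 1 := exp_sub_one_pos (by positivity)
  apply div_le_div_of_nonneg_left (mul_nonneg (by positivity) (q_nonneg _)) hda
  have h1 : a * ((j+1:ℕ):ℝ) ≤ b * ((j+1:ℕ):ℝ) := mul_le_mul_of_nonneg_right hab hnpos.le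
  have h2 := Real.exp_le_exp.2 h1
  linarith

/-- Step function integral identity: ∫_{(0,∞)} w ⌈t/b⌉₊ dt = b ∑ w(j+1). -/
lemma integral_step {b : ℝ} (hb : 0 < b) (w : ℕ → ℝ) (hw : ∀ n, 0 ≤ w n)
    (hws : Summable (fun j : ℕ => w (j + 1))) :
    ∫ t in Ioi (0:ℝ), w ⌈t / b⌉₊ = b * ∑' j : ℕ, w (j + 1) := by
  have hceil : Measurable fun t : ℝ => (⌈t / b⌉₊ : ℕ) := by
    apply Monotone.measurable
    intro s t hst
    exact Nat.ceil_le_ceil (by gcongr)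
  have hmeas : Measurable fun t : ℝ => w ⌈t / b⌉₊ := measurable_from_nat.comp hceil
  -- decomposition of Ioi 0
  have hU : Ioi (0:ℝ) = ⋃ j : ℕ, Ioc ((j:ℝ) * b) (((j:ℝ) + 1) * b) := by
    ext t
    simp only [mem_Ioi, mem_iUnion, mem_Ioc]
    constructor
    · intro ht
      have htb : 0 < t / b := div_pos ht hb
      set n : ℕ := ⌈t / b⌉₊ with hn
      have hn1 : 1 ≤ n := Nat.one_le_iff_ne_zero.2 (by
        simpa [hn] using (Nat.ceil_pos.2 htb).ne')
      refine ⟨n - 1, ?_, ?_⟩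
      · have : ((n - 1 : ℕ) : ℝ) < t / b := by
          apply (Nat.lt_ceil).1
          omega
        calc ((n-1:ℕ):ℝ) * b < (t / b) * b := by
              exact mul_lt_mul_of_pos_right this hb
          _ = t := by field_simp
      · have h2 : t / b ≤ (n : ℝ) := Nat.le_ceil _
        have : ((n - 1 : ℕ) : ℝ) + 1 = (n : ℝ) := by
          have : n - 1 + 1 = n := by omega
          exact_mod_cast congrArg (Nat.cast (R := ℝ)) this
        rw [this]
        calc t = (t / b) * b := by field_simp
          _ ≤ (n:ℝ) * b := mul_le_mul_of_nonneg_right h2 hb.le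
    · rintro ⟨j, hj1, _⟩
      have : (0:ℝ) ≤ (j:ℝ) * b := by positivity
      linarith
  have hkey : ∀ j : ℕ, ∀ t ∈ Ioc ((j:ℝ) * b) (((j:ℝ) + 1) * b), ⌈t / b⌉₊ = j + 1 := by
    intro j t ht
    rw [Nat.ceil_eq_iff (by omega)]
    constructor
    · have : ((j + 1 - 1 : ℕ) : ℝ) = (j : ℝ) := by norm_num
      rw [this]
      rw [lt_div_iff₀ hb]
      exact ht.1
    · have : ((j + 1 : ℕ) : ℝ) = (j : ℝ) + 1 := by push_cast; ring
      rw [this, div_le_iff₀ hb]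
      exact ht.2
  -- lintegral computation
  have hdisj : Pairwise (Function.onFun Disjoint
      (fun j : ℕ => Ioc ((j:ℝ) * b) (((j:ℝ) + 1) * b))) := by
    intro i j hij
    rw [Function.onFun, Set.Ioc_disjoint_Ioc]
    rcases lt_or_gt_of_ne hij with h | h
    · have h1 : ((i:ℝ) + 1) * b ≤ (j:ℝ) * b := by
        have : ((i:ℝ) + 1) ≤ (j:ℝ) := by exact_mod_cast h
        nlinarith
      calc min (((i:ℝ)+1)*b) (((j:ℝ)+1)*b) ≤ ((i:ℝ)+1)*b := min_le_left _ _
        _ ≤ (j:ℝ)*b := h1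
        _ ≤ max ((i:ℝ)*b) ((j:ℝ)*b) := le_max_right _ _
    · have h1 : ((j:ℝ) + 1) * b ≤ (i:ℝ) * b := by
        have : ((j:ℝ) + 1) ≤ (i:ℝ) := by exact_mod_cast h
        nlinarith
      calc min (((i:ℝ)+1)*b) (((j:ℝ)+1)*b) ≤ ((j:ℝ)+1)*b := min_le_right _ _
        _ ≤ (i:ℝ)*b := h1
        _ ≤ max ((i:ℝ)*b) ((j:ℝ)*b) := le_max_left _ _
  have hmeasSet : ∀ j : ℕ, MeasurableSet (Ioc ((j:ℝ) * b) (((j:ℝ) + 1) * b)) :=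
    fun j => measurableSet_Ioc
  have hlin : ∫⁻ t in Ioi (0:ℝ), ENNReal.ofReal (w ⌈t / b⌉₊) =
      ∑' j : ℕ, ENNReal.ofReal (w (j+1) * b) := by
    rw [hU, lintegral_iUnion hmeasSet hdisj]
    congr 1
    funext j
    have hconst : ∫⁻ t in Ioc ((j:ℝ) * b) (((j:ℝ) + 1) * b), ENNReal.ofReal (w ⌈t / b⌉₊) =
        ∫⁻ _ in Ioc ((j:ℝ) * b) (((j:ℝ) + 1) * b), ENNReal.ofReal (w (j+1)) := by
      apply setLIntegral_congr_fun (hmeasSet j)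
      intro t ht
      simp only [hkey j t ht]
    rw [hconst, setLIntegral_const, Real.volume_Ioc]
    rw [← ENNReal.ofReal_mul (hw _)]
    congr 1
    ring_nf
  have hnn : 0 ≤ᵐ[volume.restrict (Ioi (0:ℝ))] fun t => w ⌈t / b⌉₊ :=
    Filter.Eventually.of_forall (fun t => hw _)
  rw [integral_eq_lintegral_of_nonneg_ae hnn (hmeas.aestronglyMeasurable.restrict)]
  rw [hlin, ← ENNReal.ofReal_tsum_of_nonneg (fun j => mul_nonneg (hw _) hb.le)
    (hws.mul_right b)]
  rw [ENNReal.toReal_ofReal (tsum_nonneg (fun j => mul_nonneg (hw _) hb.le))]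
  rw [tsum_mul_right]
  ring

/-- the rescaled summand as a function of the index -/
noncomputable def W (p b : ℝ) (n : ℕ) : ℝ :=
  b ^ (p + 1/2) * ((n:ℝ) ^ p * q n / (Real.exp (b * n) - 1))

lemma W_nonneg (p b : ℝ) (hb : 0 < b) (n : ℕ) : 0 ≤ W p b n := by
  rcases Nat.eq_zero_or_pos n with h | h
  · subst h
    simp [W, q]
  · unfold W
    have hd : 0 < Real.exp (b * n) - 1 := by
      apply exp_sub_one_pos
      have : (0:ℝ) < (n:ℝ) := by exact_mod_cast h
      positivity
    have h1 : (0:ℝ) ≤ (n:ℝ) ^ p := Real.rpow_nonneg (Nat.cast_nonneg n) p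
    exact mul_nonneg (Real.rpow_nonneg hb.le _)
      (div_nonneg (mul_nonneg h1 (q_nonneg n)) hd.le)

lemma W_eq (p : ℝ) {b : ℝ} (hb : 0 < b) (n : ℕ) :
    W p b n = (b * (n:ℝ)) ^ p * (Real.sqrt b * q n) / (Real.exp (b * n) - 1) := by
  unfold W
  rw [Real.mul_rpow hb.le (Nat.cast_nonneg n), Real.rpow_add hb, Real.sqrt_eq_rpow]
  ring

lemma summable_W (p b : ℝ) (hp1 : p ≤ 1) (hb : 0 < b) :
    Summable (fun j : ℕ => W p b (j + 1)) := by
  have : (fun j : ℕ => W p b (j + 1)) = fun j => b ^ (p + 1/2) * term p b j := by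
    funext j; rfl
  rw [this]
  exact (summable_term p b hp1 hb).mul_left _

lemma integral_W (p : ℝ) {b : ℝ} (hp1 : p ≤ 1) (hb : 0 < b) :
    ∫ t in Ioi (0:ℝ), W p b ⌈t / b⌉₊ = b ^ (p + 3/2) * S p b := by
  rw [integral_step hb (W p b) (W_nonneg p b hb) (summable_W p b hp1 hb)]
  have h1 : (fun j : ℕ => W p b (j + 1)) = fun j => b ^ (p + 1/2) * term p b j := by
    funext j; rfl
  rw [h1, tsum_mul_left]
  have h2 : b * (b ^ (p + 1/2) * ∑' j, term p b j) = (b ^ (1:ℝ) * b ^ (p + 1/2)) * S p b := by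
    rw [Real.rpow_one]; unfold S; ring
  rw [h2, ← Real.rpow_add hb, show (1 + (p + 1/2)) = p + 3/2 by ring]

lemma meas_step {b : ℝ} (hb : 0 < b) (w : ℕ → ℝ) :
    Measurable fun t : ℝ => w ⌈t / b⌉₊ := by
  have hceil : Measurable fun t : ℝ => (⌈t / b⌉₊ : ℕ) := by
    apply Monotone.measurable
    intro s t hst
    exact Nat.ceil_le_ceil (by gcongr)
  exact measurable_from_nat.comp hceil

/-- Integrability of the dominating function pieces. -/
lemma integrable_aux {s : ℝ} (hs : 0 < s) :
    IntegrableOn (fun t : ℝ => Real.exp (-(t/2)) * t ^ (s-1)) (Ioi (0:ℝ)) := by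
  have h := Real.GammaIntegral_convergent hs
  have h2 : IntegrableOn (fun x : ℝ => Real.exp (-((1/2) * x)) * ((1/2) * x) ^ (s-1))
      (Ioi (0:ℝ)) := by
    apply (integrableOn_Ioi_comp_mul_left_iff
      (fun x : ℝ => Real.exp (-x) * x ^ (s-1)) 0 (by norm_num : (0:ℝ) < 1/2)).2
    simpa using h
  have h3 := h2.const_mul ((2:ℝ) ^ (s-1))
  apply (MeasureTheory.IntegrableOn.congr_fun h3 ?_ measurableSet_Ioi)
  intro x hx
  have hx0 : (0:ℝ) < x := hx
  have hmul : ((1/2 : ℝ) * x) ^ (s-1) = (1/2:ℝ) ^ (s-1) * x ^ (s-1) :=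
    Real.mul_rpow (by norm_num) hx0.le
  have hone : (2:ℝ) ^ (s-1) * (1/2:ℝ) ^ (s-1) = 1 := by
    rw [← Real.mul_rpow (by norm_num) (by norm_num)]
    norm_num
  show (2:ℝ) ^ (s-1) * (Real.exp (-((1/2) * x)) * ((1/2) * x) ^ (s-1))
      = Real.exp (-(x/2)) * x ^ (s-1)
  rw [hmul]
  have hneg : -((1/2:ℝ) * x) = -(x/2) := by ring
  rw [hneg]
  linear_combination (Real.exp (-(x/2)) * x ^ (s-1)) * hone

lemma integrable_D0 :
    IntegrableOn (fun t : ℝ => (t+1) * (Real.exp (-(t/2)) / Real.sqrt t)) (Ioi (0:ℝ)) := by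
  have h1 := integrable_aux (show (0:ℝ) < 1/2 by norm_num)
  have h2 := integrable_aux (show (0:ℝ) < 3/2 by norm_num)
  apply MeasureTheory.IntegrableOn.congr_fun (h1.add h2) ?_ measurableSet_Ioi
  intro t ht
  have ht0 : (0:ℝ) < t := ht
  have hst : 0 < Real.sqrt t := Real.sqrt_pos.2 ht0
  have hsq : Real.sqrt t * Real.sqrt t = t := Real.mul_self_sqrt ht0.le
  have hh1 : t ^ ((1:ℝ)/2 - 1) = (Real.sqrt t)⁻¹ := by
    rw [show ((1:ℝ)/2 - 1) = -(1/2) by norm_num, Real.rpow_neg ht0.le, ← Real.sqrt_eq_rpow]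
  have hh2 : t ^ ((3:ℝ)/2 - 1) = Real.sqrt t := by
    rw [Real.sqrt_eq_rpow]; norm_num
  show Real.exp (-(t/2)) * t ^ ((1:ℝ)/2 - 1) + Real.exp (-(t/2)) * t ^ ((3:ℝ)/2 - 1)
      = (t+1) * (Real.exp (-(t/2)) / Real.sqrt t)
  rw [hh1, hh2]
  have key : ∀ a e : ℝ, 0 < a → e * a⁻¹ + e * a = (a * a + 1) * (e / a) := by
    intro a e ha; field_simp; ring
  have h4 := key (Real.sqrt t) (Real.exp (-(t/2))) hst
  rw [hsq] at h4
  exact h4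

/-- Pointwise bound for the step functions. -/
lemma W_le_bound (p : ℝ) (hp0 : 0 ≤ p) (hp1 : p ≤ 1) {b t : ℝ} (hb : 0 < b) (hb1 : b ≤ 1)
    (ht : 0 < t) :
    W p b ⌈t / b⌉₊ ≤ (t+1) * (Real.exp (-(t/2)) / Real.sqrt t) := by
  set n : ℕ := ⌈t / b⌉₊ with hn
  have hn1 : 1 ≤ n := Nat.one_le_iff_ne_zero.2 (by
    simpa [hn] using (Nat.ceil_pos.2 (div_pos ht hb)).ne')
  have hnR : (1:ℝ) ≤ (n:ℝ) := by exact_mod_cast hn1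
  set x : ℝ := b * (n:ℝ) with hxdef
  have hx0 : 0 < x := by positivity
  have htx : t ≤ x := by
    have h := Nat.le_ceil (t / b)
    calc t = (t / b) * b := by field_simp
      _ ≤ (n:ℝ) * b := mul_le_mul_of_nonneg_right h hb.le
      _ = x := by rw [hxdef]; ring
  have hxt : x ≤ t + b := by
    have h := Nat.ceil_lt_add_one (le_of_lt (div_pos ht hb))
    have : (n:ℝ) < t / b + 1 := by exact_mod_cast h
    calc x = b * (n:ℝ) := hxdef
      _ ≤ b * (t / b + 1) := by nlinarith
      _ = t + b := by field_simp
  have hxt1 : x ≤ t + 1 := le_trans hxt (by linarith)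
  have hd : 0 < Real.exp x - 1 := exp_sub_one_pos hx0
  rw [W_eq p hb n]
  -- first: √b * q n ≤ √x
  have hq1 : Real.sqrt b * q n ≤ Real.sqrt x := by
    calc Real.sqrt b * q n ≤ Real.sqrt b * Real.sqrt (n:ℝ) :=
          mul_le_mul_of_nonneg_left (q_le_sqrt n) (Real.sqrt_nonneg b)
      _ = Real.sqrt x := by rw [← Real.sqrt_mul hb.le]
  have hq0 : 0 ≤ Real.sqrt b * q n := mul_nonneg (Real.sqrt_nonneg b) (q_nonneg n)
  have hxp : (0:ℝ) ≤ x ^ p := Real.rpow_nonneg hx0.le p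
  have step1 : x ^ p * (Real.sqrt b * q n) / (Real.exp x - 1)
      ≤ x ^ p * Real.sqrt x / (Real.exp x - 1) := by
    exact (div_le_div_iff_of_pos_right hd).2 (mul_le_mul_of_nonneg_left hq1 hxp)
  -- second: √x/(e^x − 1) ≤ e^{-x/2}/√x
  have hsx : 0 < Real.sqrt x := Real.sqrt_pos.2 hx0
  have step2 : x ^ p * Real.sqrt x / (Real.exp x - 1)
      ≤ x ^ p * (Real.exp (-(x/2)) / Real.sqrt x) := by
    have h1 : Real.sqrt x / (Real.exp x - 1) ≤ Real.exp (-(x/2)) / Real.sqrt x := by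
      rw [div_le_div_iff₀ hd hsx]
      have hkey := exp_lower hx0.le
      have hss : Real.sqrt x * Real.sqrt x = x := Real.mul_self_sqrt hx0.le
      have hexp : Real.exp (-(x/2)) * Real.exp (x/2) = 1 := by
        rw [← Real.exp_add]; norm_num
      nlinarith [Real.exp_pos (x/2), Real.exp_pos (-(x/2)), Real.sqrt_nonneg x]
    calc x ^ p * Real.sqrt x / (Real.exp x - 1)
        = x ^ p * (Real.sqrt x / (Real.exp x - 1)) := by ring
      _ ≤ x ^ p * (Real.exp (-(x/2)) / Real.sqrt x) :=
          mul_le_mul_of_nonneg_left h1 hxp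
  -- third: monotonicity in x vs t
  have step3 : x ^ p * (Real.exp (-(x/2)) / Real.sqrt x)
      ≤ (t+1) * (Real.exp (-(t/2)) / Real.sqrt t) := by
    have h1 : x ^ p ≤ t + 1 := by
      calc x ^ p ≤ (t+1) ^ p := Real.rpow_le_rpow hx0.le hxt1 hp0
        _ ≤ (t+1) ^ (1:ℝ) := Real.rpow_le_rpow_of_exponent_le (by linarith) hp1
        _ = t + 1 := Real.rpow_one _
    have h2 : Real.exp (-(x/2)) / Real.sqrt x ≤ Real.exp (-(t/2)) / Real.sqrt t := by
      apply div_le_div₀ (Real.exp_pos _).le _ (Real.sqrt_pos.2 ht) (Real.sqrt_le_sqrt htx)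
      exact Real.exp_le_exp.2 (by linarith)
    have h3 : (0:ℝ) ≤ Real.exp (-(x/2)) / Real.sqrt x := by positivity
    calc x ^ p * (Real.exp (-(x/2)) / Real.sqrt x) ≤ (t+1) * (Real.exp (-(x/2)) / Real.sqrt x) :=
          mul_le_mul_of_nonneg_right h1 h3
      _ ≤ (t+1) * (Real.exp (-(t/2)) / Real.sqrt t) := by
          apply mul_le_mul_of_nonneg_left h2 (by linarith)
  exact le_trans (le_trans step1 step2) step3

/-- Pointwise convergence of the step functions. -/
lemma W_tendsto (p : ℝ) {t : ℝ} (ht : 0 < t) :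
    Tendsto (fun b : ℝ => W p b ⌈t / b⌉₊) (𝓝[>] (0:ℝ))
      (𝓝 (t ^ p * Real.sqrt t / (Real.exp t - 1))) := by
  have hmem : ∀ᶠ b in 𝓝[>] (0:ℝ), 0 < b := eventually_mem_nhdsWithin
  -- x b := b * ⌈t/b⌉₊ tends to t
  have hbnd : ∀ b : ℝ, 0 < b → t ≤ b * (⌈t / b⌉₊ : ℝ) ∧ b * (⌈t / b⌉₊ : ℝ) ≤ t + b := by
    intro b hb
    constructor
    · have h := Nat.le_ceil (t / b)
      calc t = (t / b) * b := by field_simp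
        _ ≤ (⌈t / b⌉₊ : ℝ) * b := mul_le_mul_of_nonneg_right h hb.le
        _ = b * (⌈t / b⌉₊ : ℝ) := by ring
    · have h : ((⌈t / b⌉₊ : ℕ) : ℝ) < t / b + 1 :=
        Nat.ceil_lt_add_one (le_of_lt (div_pos ht hb))
      calc b * (⌈t / b⌉₊ : ℝ) ≤ b * (t / b + 1) := by nlinarith
        _ = t + b := by field_simp
  have hb0 : Tendsto (fun b : ℝ => b) (𝓝[>] (0:ℝ)) (𝓝 0) :=
    tendsto_id.mono_left nhdsWithin_le_nhds
  have hub : Tendsto (fun b : ℝ => t + b) (𝓝[>] (0:ℝ)) (𝓝 t) := by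
    have := (tendsto_const_nhds : Tendsto (fun _ : ℝ => t) (𝓝[>] (0:ℝ)) (𝓝 t)).add hb0
    simpa using this
  have hx : Tendsto (fun b : ℝ => b * (⌈t / b⌉₊ : ℝ)) (𝓝[>] (0:ℝ)) (𝓝 t) := by
    apply tendsto_of_tendsto_of_tendsto_of_le_of_le' tendsto_const_nhds hub
    · exact hmem.mono (fun b hb => (hbnd b hb).1)
    · exact hmem.mono (fun b hb => (hbnd b hb).2)
  -- limits of the three factors
  have hxp : Tendsto (fun b : ℝ => (b * (⌈t / b⌉₊ : ℝ)) ^ p) (𝓝[>] (0:ℝ)) (𝓝 (t ^ p)) := by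
    have hc : ContinuousAt (fun y : ℝ => y ^ p) t :=
      Real.continuousAt_rpow_const t p (Or.inl (ne_of_gt ht))
    exact hc.tendsto.comp hx
  have hde : Tendsto (fun b : ℝ => Real.exp (b * (⌈t / b⌉₊ : ℝ)) - 1) (𝓝[>] (0:ℝ))
      (𝓝 (Real.exp t - 1)) :=
    ((Real.continuous_exp.tendsto t).comp hx).sub tendsto_const_nhds
  have hsq : Tendsto (fun b : ℝ => Real.sqrt b * q ⌈t / b⌉₊) (𝓝[>] (0:ℝ))
      (𝓝 (Real.sqrt t)) := by
    have hup : Tendsto (fun b : ℝ => Real.sqrt (b * (⌈t / b⌉₊ : ℝ))) (𝓝[>] (0:ℝ))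
        (𝓝 (Real.sqrt t)) := (Real.continuous_sqrt.tendsto t).comp hx
    have hsb : Tendsto (fun b : ℝ => Real.sqrt b) (𝓝[>] (0:ℝ)) (𝓝 0) := by
      have := (Real.continuous_sqrt.tendsto 0).comp hb0
      simpa [Function.comp_def] using this
    have hlo : Tendsto (fun b : ℝ => Real.sqrt (b * (⌈t / b⌉₊ : ℝ)) - Real.sqrt b)
        (𝓝[>] (0:ℝ)) (𝓝 (Real.sqrt t)) := by
      have := hup.sub hsb
      simpa using this
    apply tendsto_of_tendsto_of_tendsto_of_le_of_le' hlo hup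
    · apply hmem.mono
      intro b hb
      have h1 : Real.sqrt ((⌈t / b⌉₊ : ℝ)) - 1 ≤ q ⌈t / b⌉₊ := by
        have := sqrt_lt_q_add_one ⌈t / b⌉₊
        linarith
      have h2 : Real.sqrt b * (Real.sqrt ((⌈t / b⌉₊ : ℝ)) - 1) ≤ Real.sqrt b * q ⌈t / b⌉₊ :=
        mul_le_mul_of_nonneg_left h1 (Real.sqrt_nonneg b)
      have h3 : Real.sqrt b * Real.sqrt ((⌈t / b⌉₊ : ℝ)) = Real.sqrt (b * (⌈t / b⌉₊ : ℝ)) :=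
        (Real.sqrt_mul hb.le _).symm
      nlinarith [Real.sqrt_nonneg b]
    · apply hmem.mono
      intro b hb
      have h1 : q ⌈t / b⌉₊ ≤ Real.sqrt ((⌈t / b⌉₊ : ℝ)) := q_le_sqrt _
      have h3 : Real.sqrt b * Real.sqrt ((⌈t / b⌉₊ : ℝ)) = Real.sqrt (b * (⌈t / b⌉₊ : ℝ)) :=
        (Real.sqrt_mul hb.le _).symm
      nlinarith [Real.sqrt_nonneg b]
  have hcomb := (hxp.mul hsq).div hde (ne_of_gt (exp_sub_one_pos ht))
  apply Tendsto.congr' _ hcomb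
  apply hmem.mono
  intro b hb
  exact (W_eq p hb _).symm

/-- The main convergence result for the scaled sums. -/
lemma tendsto_main (p : ℝ) (hp0 : 0 ≤ p) (hp1 : p ≤ 1) :
    Tendsto (fun b : ℝ => b ^ (p + 3/2) * S p b) (𝓝[>] (0:ℝ))
      (𝓝 (∫ t in Ioi (0:ℝ), t ^ p * Real.sqrt t / (Real.exp t - 1))) := by
  have hmem : ∀ᶠ b in 𝓝[>] (0:ℝ), 0 < b := eventually_mem_nhdsWithin
  have hmem1 : ∀ᶠ b in 𝓝[>] (0:ℝ), b ∈ Ioc (0:ℝ) 1 :=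
    Ioc_mem_nhdsGT_of_mem (by norm_num : (0:ℝ) ∈ Ico (0:ℝ) 1)
  have key := tendsto_integral_filter_of_dominated_convergence
    (μ := volume.restrict (Ioi (0:ℝ))) (l := nhdsWithin (0:ℝ) (Set.Ioi 0))
    (F := fun b t => W p b ⌈t / b⌉₊)
    (f := fun t => t ^ p * Real.sqrt t / (Real.exp t - 1))
    (bound := fun t => (t+1) * (Real.exp (-(t/2)) / Real.sqrt t))
    (hmem.mono (fun b hb => ((meas_step hb (W p b)).aestronglyMeasurable).restrict))
    (hmem1.mono (fun b hb => by
      rw [ae_restrict_iff' measurableSet_Ioi]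
      apply Filter.Eventually.of_forall
      intro t ht
      rw [Real.norm_eq_abs, abs_of_nonneg (W_nonneg p b hb.1 _)]
      exact W_le_bound p hp0 hp1 hb.1 hb.2 ht))
    integrable_D0
    (by
      rw [ae_restrict_iff' measurableSet_Ioi]
      apply Filter.Eventually.of_forall
      intro t ht
      exact W_tendsto p ht)
  apply Tendsto.congr' _ key
  apply hmem.mono
  intro b hb
  exact (integral_W p hp1 hb)

lemma integrable_limit (p : ℝ) (hp0 : 0 ≤ p) (hp1 : p ≤ 1) :
    IntegrableOn (fun t : ℝ => t ^ p * Real.sqrt t / (Real.exp t - 1)) (Ioi (0:ℝ)) := by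
  apply Integrable.mono integrable_D0
  · apply Measurable.aestronglyMeasurable
    exact ((measurable_id.pow_const p).mul Real.continuous_sqrt.measurable).div
      ((Real.continuous_exp.measurable).sub measurable_const)
  · rw [ae_restrict_iff' measurableSet_Ioi]
    apply Filter.Eventually.of_forall
    intro t ht
    have ht0 : (0:ℝ) < t := ht
    have hd : 0 < Real.exp t - 1 := exp_sub_one_pos ht0
    have hst : 0 < Real.sqrt t := Real.sqrt_pos.2 ht0
    have hnn : 0 ≤ t ^ p * Real.sqrt t / (Real.exp t - 1) := by
      apply div_nonneg _ hd.le
      exact mul_nonneg (Real.rpow_nonneg ht0.le p) (Real.sqrt_nonneg t)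
    rw [Real.norm_eq_abs, abs_of_nonneg hnn, Real.norm_eq_abs]
    have hDnn : 0 ≤ (t+1) * (Real.exp (-(t/2)) / Real.sqrt t) := by positivity
    rw [abs_of_nonneg hDnn]
    have hxp : (0:ℝ) ≤ t ^ p := Real.rpow_nonneg ht0.le p
    have step2 : t ^ p * Real.sqrt t / (Real.exp t - 1)
        ≤ t ^ p * (Real.exp (-(t/2)) / Real.sqrt t) := by
      have h1 : Real.sqrt t / (Real.exp t - 1) ≤ Real.exp (-(t/2)) / Real.sqrt t := by
        rw [div_le_div_iff₀ hd hst]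
        have hkey := exp_lower ht0.le
        have hss : Real.sqrt t * Real.sqrt t = t := Real.mul_self_sqrt ht0.le
        have hexp : Real.exp (-(t/2)) * Real.exp (t/2) = 1 := by
          rw [← Real.exp_add]; norm_num
        nlinarith [Real.exp_pos (t/2), Real.exp_pos (-(t/2)), Real.sqrt_nonneg t]
      calc t ^ p * Real.sqrt t / (Real.exp t - 1)
          = t ^ p * (Real.sqrt t / (Real.exp t - 1)) := by ring
        _ ≤ t ^ p * (Real.exp (-(t/2)) / Real.sqrt t) := mul_le_mul_of_nonneg_left h1 hxp
    have step3 : t ^ p * (Real.exp (-(t/2)) / Real.sqrt t)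
        ≤ (t+1) * (Real.exp (-(t/2)) / Real.sqrt t) := by
      have h1 : t ^ p ≤ t + 1 := by
        calc t ^ p ≤ (t+1) ^ p := Real.rpow_le_rpow ht0.le (by linarith) hp0
          _ ≤ (t+1) ^ (1:ℝ) := Real.rpow_le_rpow_of_exponent_le (by linarith) hp1
          _ = t + 1 := Real.rpow_one _
      exact mul_le_mul_of_nonneg_right h1 (by positivity)
    linarith

lemma I_pos (p : ℝ) (hp0 : 0 ≤ p) (hp1 : p ≤ 1) :
    0 < ∫ t in Ioi (0:ℝ), t ^ p * Real.sqrt t / (Real.exp t - 1) := by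
  rw [setIntegral_pos_iff_support_of_nonneg_ae _ (integrable_limit p hp0 hp1)]
  · have hsub : Ioi (0:ℝ) ⊆ Function.support (fun t : ℝ => t ^ p * Real.sqrt t / (Real.exp t - 1)) ∩ Ioi 0 := by
      intro t ht
      have ht0 : (0:ℝ) < t := ht
      refine ⟨?_, ht⟩
      have : 0 < t ^ p * Real.sqrt t / (Real.exp t - 1) := by
        apply div_pos _ (exp_sub_one_pos ht0)
        exact mul_pos (Real.rpow_pos_of_pos ht0 p) (Real.sqrt_pos.2 ht0)
      exact ne_of_gt this
    calc (0:ENNReal) < volume (Ioi (0:ℝ)) := by rw [Real.volume_Ioi]; norm_num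
      _ ≤ _ := measure_mono hsub
  · exact (ae_restrict_iff' measurableSet_Ioi).2 (Filter.Eventually.of_forall (fun t ht => by
      have ht0 : (0:ℝ) < t := ht
      exact div_nonneg (mul_nonneg (Real.rpow_nonneg ht0.le p) (Real.sqrt_nonneg t))
        (exp_sub_one_pos ht0).le))

end NcrAux

open NcrAux

/-- If all multiplicities q_j = ⌊√j⌋ are multiplied by K ≥ 1, the critical number
scales as Ñ_cr ∼ K^{2/5} N_cr as M → ∞. -/
theorem Ncr_scaling_with_colors (K : ℝ) (hK : 1 ≤ K) (β βt : ℝ → ℝ)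
    (hβpos : ∀ M : ℝ, 0 < M → 0 < β M)
    (hβtpos : ∀ M : ℝ, 0 < M → 0 < βt M)
    (hβ : ∀ M : ℝ, 0 < M →
      (∑' j : ℕ, ((j + 1 : ℕ) : ℝ) * (⌊Real.sqrt ((j + 1 : ℕ) : ℝ)⌋₊ : ℝ) /
          (Real.exp (β M * ((j + 1 : ℕ) : ℝ)) - 1)) = M)
    (hβt : ∀ M : ℝ, 0 < M →
      (∑' j : ℕ, ((j + 1 : ℕ) : ℝ) * (K * (⌊Real.sqrt ((j + 1 : ℕ) : ℝ)⌋₊ : ℝ)) /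
          (Real.exp (βt M * ((j + 1 : ℕ) : ℝ)) - 1)) = M) :
    Filter.Tendsto
      (fun M : ℝ =>
        (∑' j : ℕ, (K * (⌊Real.sqrt ((j + 1 : ℕ) : ℝ)⌋₊ : ℝ)) /
            (Real.exp (βt M * ((j + 1 : ℕ) : ℝ)) - 1)) /
          (K ^ ((2:ℝ)/5) *
            ∑' j : ℕ, (⌊Real.sqrt ((j + 1 : ℕ) : ℝ)⌋₊ : ℝ) /
              (Real.exp (β M * ((j + 1 : ℕ) : ℝ)) - 1)))
      Filter.atTop (nhds 1) := by
  have hK0 : (0:ℝ) < K := by linarith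
  -- translate hypotheses into statements about S
  have hS1β : ∀ M : ℝ, 0 < M → S 1 (β M) = M := by
    intro M hM
    have h1 : S 1 (β M) = ∑' j : ℕ, ((j + 1 : ℕ) : ℝ) * (⌊Real.sqrt ((j + 1 : ℕ) : ℝ)⌋₊ : ℝ) /
        (Real.exp (β M * ((j + 1 : ℕ) : ℝ)) - 1) := by
      apply tsum_congr
      intro j
      unfold term q
      rw [Real.rpow_one]
    rw [h1, hβ M hM]
  have hS1βt : ∀ M : ℝ, 0 < M → S 1 (βt M) = M / K := by
    intro M hM
    have h := hβt M hM
    have h2 : (∑' j : ℕ, ((j + 1 : ℕ) : ℝ) * (K * (⌊Real.sqrt ((j + 1 : ℕ) : ℝ)⌋₊ : ℝ)) /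
        (Real.exp (βt M * ((j + 1 : ℕ) : ℝ)) - 1)) = K * S 1 (βt M) := by
      rw [show S 1 (βt M) = ∑' j : ℕ, term 1 (βt M) j from rfl, ← tsum_mul_left]
      apply tsum_congr
      intro j
      unfold term q
      rw [Real.rpow_one]
      ring
    rw [h2] at h
    field_simp [ne_of_gt hK0] at h ⊢
    linarith
  -- the goal in terms of S
  have hnum : ∀ M : ℝ,
      (∑' j : ℕ, (K * (⌊Real.sqrt ((j + 1 : ℕ) : ℝ)⌋₊ : ℝ)) /
        (Real.exp (βt M * ((j + 1 : ℕ) : ℝ)) - 1)) = K * S 0 (βt M) := by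
    intro M
    rw [show S 0 (βt M) = ∑' j : ℕ, term 0 (βt M) j from rfl, ← tsum_mul_left]
    apply tsum_congr
    intro j
    unfold term q
    rw [Real.rpow_zero, one_mul, mul_div_assoc]
  have hden : ∀ M : ℝ,
      (∑' j : ℕ, (⌊Real.sqrt ((j + 1 : ℕ) : ℝ)⌋₊ : ℝ) /
        (Real.exp (β M * ((j + 1 : ℕ) : ℝ)) - 1)) = S 0 (β M) := by
    intro M
    apply tsum_congr
    intro j
    unfold term q
    rw [Real.rpow_zero, one_mul]
  -- β M → 0⁺ and βt M → 0⁺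
  have hβto0 : Tendsto β atTop (𝓝[>] (0:ℝ)) := by
    rw [tendsto_nhdsWithin_iff]
    constructor
    · rw [tendsto_order]
      constructor
      · intro a ha
        filter_upwards [eventually_ge_atTop (1:ℝ)] with M hM
        have := hβpos M (by linarith)
        linarith
      · intro a ha
        filter_upwards [eventually_ge_atTop (max 1 (S 1 a + 1))] with M hM
        have hM1 : (1:ℝ) ≤ M := le_trans (le_max_left _ _) hM
        have hM2 : S 1 a + 1 ≤ M := le_trans (le_max_right _ _) hM
        by_contra hcon
        push_neg at hcon
        have h := S_anti 1 le_rfl ha hcon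
        rw [hS1β M (by linarith)] at h
        linarith
    · filter_upwards [eventually_ge_atTop (1:ℝ)] with M hM
      exact hβpos M (by linarith)
  have hβtto0 : Tendsto βt atTop (𝓝[>] (0:ℝ)) := by
    rw [tendsto_nhdsWithin_iff]
    constructor
    · rw [tendsto_order]
      constructor
      · intro a ha
        filter_upwards [eventually_ge_atTop (1:ℝ)] with M hM
        have := hβtpos M (by linarith)
        linarith
      · intro a ha
        filter_upwards [eventually_ge_atTop (max 1 (K * (S 1 a + 1)))] with M hM
        have hM1 : (1:ℝ) ≤ M := le_trans (le_max_left _ _) hM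
        have hM2 : K * (S 1 a + 1) ≤ M := le_trans (le_max_right _ _) hM
        by_contra hcon
        push_neg at hcon
        have h := S_anti 1 le_rfl ha hcon
        rw [hS1βt M (by linarith)] at h
        have hSa : 0 < S 1 a := S_pos 1 a le_rfl ha
        have : M / K ≥ S 1 a + 1 := by
          rw [ge_iff_le, le_div_iff₀ hK0]
          linarith [mul_comm K (S 1 a + 1)]
        linarith
    · filter_upwards [eventually_ge_atTop (1:ℝ)] with M hM
      exact hβtpos M (by linarith)
  -- limits of the scaled sums
  set A : ℝ := ∫ t in Set.Ioi (0:ℝ), t ^ (1:ℝ) * Real.sqrt t / (Real.exp t - 1) with hA_def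
  set B : ℝ := ∫ t in Set.Ioi (0:ℝ), t ^ (0:ℝ) * Real.sqrt t / (Real.exp t - 1) with hB_def
  have hApos : 0 < A := I_pos 1 (by norm_num) le_rfl
  have hBpos : 0 < B := I_pos 0 le_rfl (by norm_num)
  have hfe1 : (fun b : ℝ => b ^ ((1:ℝ) + 3/2) * S 1 b) = (fun b : ℝ => b ^ ((5:ℝ)/2) * S 1 b) := by
    funext b; norm_num
  have hfe0 : (fun b : ℝ => b ^ ((0:ℝ) + 3/2) * S 0 b) = (fun b : ℝ => b ^ ((3:ℝ)/2) * S 0 b) := by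
    funext b; norm_num
  have hA : Tendsto (fun M => (β M) ^ ((5:ℝ)/2) * S 1 (β M)) atTop (𝓝 A) := by
    have h := (tendsto_main 1 (by norm_num) le_rfl).comp hβto0
    rw [hfe1] at h
    exact h
  have hAt : Tendsto (fun M => (βt M) ^ ((5:ℝ)/2) * S 1 (βt M)) atTop (𝓝 A) := by
    have h := (tendsto_main 1 (by norm_num) le_rfl).comp hβtto0
    rw [hfe1] at h
    exact h
  have hB : Tendsto (fun M => (β M) ^ ((3:ℝ)/2) * S 0 (β M)) atTop (𝓝 B) := by
    have h := (tendsto_main 0 le_rfl (by norm_num)).comp hβto0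
    rw [hfe0] at h
    exact h
  have hBt : Tendsto (fun M => (βt M) ^ ((3:ℝ)/2) * S 0 (βt M)) atTop (𝓝 B) := by
    have h := (tendsto_main 0 le_rfl (by norm_num)).comp hβtto0
    rw [hfe0] at h
    exact h
  have hMpos : ∀ᶠ M : ℝ in atTop, (0:ℝ) < M := eventually_gt_atTop 0
  -- ratio of betas
  have hr52 : Tendsto (fun M => (βt M / β M) ^ ((5:ℝ)/2)) atTop (𝓝 K) := by
    have h1 := (hAt.div hA (ne_of_gt hApos)).mul_const K
    have h2 : A / A * K = K := by rw [div_self (ne_of_gt hApos), one_mul]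
    rw [h2] at h1
    apply Tendsto.congr' _ h1
    filter_upwards [hMpos] with M hM
    have hu : 0 < β M := hβpos M hM
    have hv : 0 < βt M := hβtpos M hM
    have hu52 : 0 < (β M) ^ ((5:ℝ)/2) := Real.rpow_pos_of_pos hu _
    have habs : ∀ a b m k : ℝ, b ≠ 0 → m ≠ 0 → k ≠ 0 → (a * (m / k)) / (b * m) * k = a / b := by
      intro a b m k hb hm hk
      field_simp
    simp only [Pi.div_apply]
    rw [hS1β M hM, hS1βt M hM, Real.div_rpow hv.le hu.le]
    exact habs _ _ _ _ hu52.ne' (ne_of_gt hM) (ne_of_gt hK0)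
  have hrK : Tendsto (fun M => βt M / β M) atTop (𝓝 (K ^ ((2:ℝ)/5))) := by
    have hcont : ContinuousAt (fun y : ℝ => y ^ ((2:ℝ)/5)) K :=
      Real.continuousAt_rpow_const K _ (Or.inl (ne_of_gt hK0))
    have h := hcont.tendsto.comp hr52
    simp only [Function.comp_def] at h
    apply Tendsto.congr' _ h
    filter_upwards [hMpos] with M hM
    have hu : 0 < β M := hβpos M hM
    have hv : 0 < βt M := hβtpos M hM
    have hr0 : 0 ≤ βt M / β M := by positivity
    rw [← Real.rpow_mul hr0]
    norm_num
  -- ratio of the S 0 sums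
  have hKexp : (0:ℝ) < K ^ ((2:ℝ)/5) := Real.rpow_pos_of_pos hK0 _
  have hinv : Tendsto (fun M => β M / βt M) atTop (𝓝 ((K ^ ((2:ℝ)/5))⁻¹)) := by
    have h := hrK.inv₀ (ne_of_gt hKexp)
    apply Tendsto.congr' _ h
    filter_upwards [hMpos] with M hM
    rw [inv_div]
  have h32 : Tendsto (fun M => (β M / βt M) ^ ((3:ℝ)/2)) atTop
      (𝓝 (((K ^ ((2:ℝ)/5))⁻¹) ^ ((3:ℝ)/2))) := by
    have hcont : ContinuousAt (fun y : ℝ => y ^ ((3:ℝ)/2)) ((K ^ ((2:ℝ)/5))⁻¹) :=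
      Real.continuousAt_rpow_const _ _ (Or.inl (by positivity))
    exact hcont.tendsto.comp hinv
  have hratio : Tendsto (fun M => S 0 (βt M) / S 0 (β M)) atTop
      (𝓝 (K ^ (-(3:ℝ)/5))) := by
    have h1 := (hBt.div hB (ne_of_gt hBpos)).mul h32
    have h2 : B / B * (((K ^ ((2:ℝ)/5))⁻¹) ^ ((3:ℝ)/2)) = K ^ (-(3:ℝ)/5) := by
      rw [div_self (ne_of_gt hBpos), one_mul, ← Real.rpow_neg hK0.le, ← Real.rpow_mul hK0.le]
      norm_num
    rw [h2] at h1
    apply Tendsto.congr' _ h1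
    filter_upwards [hMpos] with M hM
    have hu : 0 < β M := hβpos M hM
    have hv : 0 < βt M := hβtpos M hM
    have hu32 : 0 < (β M) ^ ((3:ℝ)/2) := Real.rpow_pos_of_pos hu _
    have hv32 : 0 < (βt M) ^ ((3:ℝ)/2) := Real.rpow_pos_of_pos hv _
    have hS0b : 0 < S 0 (β M) := S_pos 0 _ (by norm_num) hu
    have habs : ∀ a b x y : ℝ, a ≠ 0 → b ≠ 0 → y ≠ 0 → (a * x) / (b * y) * (b / a) = x / y := by
      intro a b x y ha hb hy
      field_simp
    simp only [Pi.div_apply]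
    rw [Real.div_rpow hu.le hv.le]
    exact habs _ _ _ _ hv32.ne' hu32.ne' hS0b.ne'
  -- final assembly
  have hfinal := hratio.const_mul (K ^ ((3:ℝ)/5))
  have hlim : K ^ ((3:ℝ)/5) * K ^ (-(3:ℝ)/5) = 1 := by
    rw [← Real.rpow_add hK0]
    norm_num
  rw [hlim] at hfinal
  apply Tendsto.congr' _ hfinal
  filter_upwards [hMpos] with M hM
  rw [hnum M, hden M]
  have hKK : K ^ ((3:ℝ)/5) * K ^ ((2:ℝ)/5) = K := by
    rw [← Real.rpow_add hK0]
    norm_num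
  have hS0β : 0 < S 0 (β M) := S_pos 0 _ (by norm_num) (hβpos M hM)
  have habs : ∀ c c2 c3 x y : ℝ, c2 ≠ 0 → y ≠ 0 → c3 * c2 = c → (c * x) / (c2 * y) = c3 * (x / y) := by
    intro c c2 c3 x y hc2 hy hcc
    subst hcc
    field_simp
  exact (habs K (K ^ ((2:ℝ)/5)) (K ^ ((3:ℝ)/5)) _ _ (ne_of_gt hKexp) (ne_of_gt hS0β) hKK).symm
end
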